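/- arXiv:1311.2361 — 5 statements merged into one kernel-verified Lean document; each statement's English description precedes it below -/
import Mathlib

section
/- Let n be a positive integer and A an n-by-n complex matrix with p(A) finite, say p(A) = j and a(A) = k. Then one of the following holds: (a) j = k ≤ n − 1; (b) j ≤ k − 1 and j + k ≤ n − 1; (c) j ≤ k − 2 and j + k = n. -/
open Matrix

noncomputable section

/-- An `ι`-by-`ι` complex matrix `A` is a *partial isometry* if `‖Ax‖ = ‖x‖` for every
vector `x` in the orthogonal complement of `ker A` (Euclidean structure). -/
def Matrix.IsPartialIsometry {ι : Type*} [Fintype ι] [DecidableEq ι]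
    (A : Matrix ι ι ℂ) : Prop :=
  ∀ x ∈ (LinearMap.ker (Matrix.toEuclideanLin A))ᗮ, ‖Matrix.toEuclideanLin A x‖ = ‖x‖

/-- The *power partial isometry index* `p(A)`: the supremum (in `ℕ∞`, possibly `⊤`) of the
nonnegative integers `j` such that `I, A, A², …, A^j` are all partial isometries. -/
def Matrix.pIndex {ι : Type*} [Fintype ι] [DecidableEq ι] (A : Matrix ι ι ℂ) : ℕ∞ :=
  sSup ((↑) '' {j : ℕ | ∀ i ≤ j, (A ^ i).IsPartialIsometry})

/-- The *ascent* `a(A)`: the smallest nonnegative integer `k` with `ker A^k = ker A^(k+1)`. -/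
def Matrix.ascent {ι : Type*} [Fintype ι] [DecidableEq ι] (A : Matrix ι ι ℂ) : ℕ :=
  sInf {k : ℕ | LinearMap.ker (Matrix.toEuclideanLin (A ^ k)) =
    LinearMap.ker (Matrix.toEuclideanLin (A ^ (k + 1)))}

/-- `A` is unitarily similar to `B` (allowing different, necessarily equipotent, index types):
`B = U* A U` for some unitary `U`. -/
def Matrix.UnitarilySimilarTo {ι κ : Type*} [Fintype ι] [Fintype κ] [DecidableEq ι]
    [DecidableEq κ] (A : Matrix ι ι ℂ) (B : Matrix κ κ ℂ) : Prop :=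
  ∃ U : Matrix ι κ ℂ, Uᴴ * U = 1 ∧ U * Uᴴ = 1 ∧ B = Uᴴ * A * U

/-- The `q`-by-`q` nilpotent Jordan block `J_q`. -/
def JordanBlock (q : ℕ) : Matrix (Fin q) (Fin q) ℂ :=
  Matrix.of fun a b => if (b : ℕ) = (a : ℕ) + 1 then 1 else 0

/-- `A` is of class `S_n`: a contraction whose eigenvalues all have moduli strictly
less than `1` and with `rank (1 - A*A) = 1`. -/
def Matrix.IsClassSn {n : ℕ} (A : Matrix (Fin n) (Fin n) ℂ) : Prop :=
  (∀ x : EuclideanSpace ℂ (Fin n), ‖Matrix.toEuclideanLin A x‖ ≤ ‖x‖) ∧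
  (∀ z ∈ spectrum ℂ A, ‖z‖ < 1) ∧
  (1 - Aᴴ * A).rank = 1


set_option linter.unusedSectionVars false
set_option linter.unusedVariables false

noncomputable section

section Op

variable {E : Type} [NormedAddCommGroup E] [InnerProductSpace ℂ E] [FiniteDimensional ℂ E]

/-- operator-level partial isometry -/
def OpPI (T : E →ₗ[ℂ] E) : Prop := ∀ x ∈ (LinearMap.ker T)ᗮ, ‖T x‖ = ‖x‖

/-- operator-level ascent -/
def opAscent (T : E →ₗ[ℂ] E) : ℕ :=
  sInf {m | LinearMap.ker (T ^ m) = LinearMap.ker (T ^ (m + 1))}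

lemma opPI_one : OpPI (1 : E →ₗ[ℂ] E) := fun x _ => rfl

lemma opPI_of_finrank_zero (T : E →ₗ[ℂ] E) (h : Module.finrank ℂ E = 0) : OpPI T := by
  have : Subsingleton E := Module.finrank_zero_iff.mp h
  intro x _
  rw [Subsingleton.elim x 0]
  simp

lemma one_le_finrank_of_not_opPI {T : E →ₗ[ℂ] E} (h : ¬ OpPI T) :
    1 ≤ Module.finrank ℂ E := by
  by_contra hc
  exact h (opPI_of_finrank_zero T (by omega))

lemma ker_le_ker_pow_succ (T : E →ₗ[ℂ] E) (m : ℕ) :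
    LinearMap.ker (T ^ m) ≤ LinearMap.ker (T ^ (m + 1)) := by
  intro x hx
  rw [LinearMap.mem_ker] at hx ⊢
  rw [pow_succ', Module.End.mul_apply, hx, map_zero]

lemma ker_le_ker_pow_of_le (T : E →ₗ[ℂ] E) {a b : ℕ} (h : a ≤ b) :
    LinearMap.ker (T ^ a) ≤ LinearMap.ker (T ^ b) := by
  induction b with
  | zero => simp_all
  | succ b ih =>
    rcases Nat.lt_or_ge a (b+1) with h' | h'
    · exact le_trans (ih (by omega)) (ker_le_ker_pow_succ T b)
    · have : a = b + 1 := by omega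
      subst this; exact le_rfl

lemma ascent_set_upward (T : E →ₗ[ℂ] E) {m : ℕ}
    (h : LinearMap.ker (T ^ m) = LinearMap.ker (T ^ (m + 1))) :
    LinearMap.ker (T ^ (m + 1)) = LinearMap.ker (T ^ (m + 2)) := by
  refine le_antisymm (ker_le_ker_pow_succ T (m+1)) ?_
  intro x hx
  rw [LinearMap.mem_ker] at hx ⊢
  have h1 : (T ^ (m + 1)) (T x) = 0 := by
    rw [← Module.End.mul_apply, ← pow_succ]; exact hx
  have h2 : T x ∈ LinearMap.ker (T ^ m) := h ▸ (LinearMap.mem_ker.mpr h1)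
  rw [LinearMap.mem_ker] at h2
  rw [pow_succ, Module.End.mul_apply]; exact h2

lemma chain_lb (T : E →ₗ[ℂ] E) (i : ℕ)
    (h : ∀ m < i, LinearMap.ker (T ^ m) ≠ LinearMap.ker (T ^ (m + 1))) :
    i ≤ Module.finrank ℂ (LinearMap.ker (T ^ i)) := by
  induction i with
  | zero => simp
  | succ i ih =>
    have h1 : i ≤ Module.finrank ℂ (LinearMap.ker (T ^ i)) :=
      ih (fun m hm => h m (by omega))
    have h2 : LinearMap.ker (T ^ i) < LinearMap.ker (T ^ (i+1)) :=
      lt_of_le_of_ne (ker_le_ker_pow_succ T i) (h i (by omega))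
    have := Submodule.finrank_lt_finrank_of_lt h2
    omega

lemma ascent_set_nonempty (T : E →ₗ[ℂ] E) :
    {m | LinearMap.ker (T ^ m) = LinearMap.ker (T ^ (m + 1))}.Nonempty := by
  by_contra h
  rw [Set.not_nonempty_iff_eq_empty] at h
  have h1 : ∀ m < Module.finrank ℂ E + 1,
      LinearMap.ker (T ^ m) ≠ LinearMap.ker (T ^ (m + 1)) := by
    intro m _ hm
    exact absurd (h ▸ hm : m ∈ (∅ : Set ℕ)) (Set.notMem_empty m)
  have := chain_lb T (Module.finrank ℂ E + 1) h1
  have := Submodule.finrank_le (LinearMap.ker (T ^ (Module.finrank ℂ E + 1)))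
  omega

lemma opAscent_spec (T : E →ₗ[ℂ] E) :
    LinearMap.ker (T ^ (opAscent T)) = LinearMap.ker (T ^ (opAscent T + 1)) :=
  Nat.sInf_mem (ascent_set_nonempty T)

lemma opAscent_le (T : E →ₗ[ℂ] E) {m : ℕ}
    (h : LinearMap.ker (T ^ m) = LinearMap.ker (T ^ (m + 1))) : opAscent T ≤ m :=
  Nat.sInf_le h

lemma ne_of_lt_opAscent (T : E →ₗ[ℂ] E) {m : ℕ} (h : m < opAscent T) :
    LinearMap.ker (T ^ m) ≠ LinearMap.ker (T ^ (m + 1)) :=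
  Nat.notMem_of_lt_sInf h

lemma opAscent_le_finrank (T : E →ₗ[ℂ] E) : opAscent T ≤ Module.finrank ℂ E := by
  have h1 := chain_lb T (opAscent T) (fun m hm => ne_of_lt_opAscent T hm)
  have h2 := Submodule.finrank_le (LinearMap.ker (T ^ (opAscent T)))
  omega

lemma ker_ne_bot_of_opAscent_pos (T : E →ₗ[ℂ] E) (h : 0 < opAscent T) :
    LinearMap.ker T ≠ ⊥ := by
  have := ne_of_lt_opAscent T h
  intro hc
  apply this
  simp only [zero_add, pow_zero, pow_one, hc, Module.End.one_eq_id, LinearMap.ker_id]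

lemma opAscent_pos_of_ker_ne_bot (T : E →ₗ[ℂ] E) (h : LinearMap.ker T ≠ ⊥) :
    0 < opAscent T := by
  rcases Nat.eq_zero_or_pos (opAscent T) with h0 | h0
  · have := opAscent_spec T
    rw [h0] at this
    simp only [zero_add, pow_zero, pow_one, Module.End.one_eq_id, LinearMap.ker_id] at this
    exact absurd this.symm h
  · exact h0

lemma opPI_pow_of_ker_eq_bot {T : E →ₗ[ℂ] E} (hT : OpPI T)
    (h : LinearMap.ker T = ⊥) (m : ℕ) : OpPI (T ^ m) := by
  have hiso : ∀ x : E, ‖T x‖ = ‖x‖ := by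
    intro x
    exact hT x (by rw [h, Submodule.bot_orthogonal_eq_top]; trivial)
  have hm : ∀ x : E, ‖(T ^ m) x‖ = ‖x‖ := by
    induction m with
    | zero => intro x; simp
    | succ m ih =>
      intro x
      rw [pow_succ', Module.End.mul_apply, hiso, ih]
  exact fun x _ => hm x


section Comp

variable (T : E →ₗ[ℂ] E)

/-- The compression of `T` to the orthogonal complement of its kernel. -/
def opComp : (LinearMap.ker T)ᗮ →ₗ[ℂ] (LinearMap.ker T)ᗮ :=
  (Submodule.orthogonalProjectionOnto (LinearMap.ker T)ᗮ).toLinearMap ∘ₗ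
    (T ∘ₗ (LinearMap.ker T)ᗮ.subtype)

local notation "K" => (LinearMap.ker T)ᗮ
local notation "P" => Submodule.orthogonalProjectionOnto (LinearMap.ker T)ᗮ
local notation "C" => opComp T

lemma opComp_apply (v : K) : C v = P (T v) := rfl

lemma orthocompl_orthocompl : (LinearMap.ker T)ᗮᗮ = LinearMap.ker T :=
  Submodule.orthogonal_orthogonal _

lemma apply_proj (x : E) : T ((P x : E)) = T x := by
  have h1 : x - (P x : E) ∈ (LinearMap.ker T)ᗮᗮ :=
    Submodule.sub_starProjection_mem_orthogonal x
  rw [orthocompl_orthocompl] at h1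
  have h2 : T (x - (P x : E)) = 0 := h1
  rw [map_sub, sub_eq_zero] at h2
  exact h2.symm

lemma proj_apply_of_mem (v : K) : P ((v : E)) = v :=
  Submodule.orthogonalProjectionOnto_mem_subspace_eq_self v

/-- Key identity: `T^(m+1) x = T (C^m (P x))`. -/
lemma pow_succ_apply_eq (m : ℕ) (x : E) :
    (T ^ (m + 1)) x = T (((C ^ m) (P x) : E)) := by
  induction m generalizing x with
  | zero =>
    simp only [pow_one, pow_zero, Module.End.one_apply]
    exact (apply_proj T x).symm
  | succ m ih =>
    have h1 : (T ^ (m + 2)) x = (T ^ (m + 1)) (T x) := by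
      rw [pow_succ, Module.End.mul_apply]
    rw [h1, ih (T x)]
    congr 2
    have h2 : P (T x) = C (P x) := by
      rw [opComp_apply]
      congr 1
      exact (apply_proj T x).symm
    rw [h2, ← Module.End.mul_apply, ← pow_succ]

variable {T}

lemma norm_apply_coe (hT : OpPI T) (v : K) : ‖T v‖ = ‖(v : E)‖ := hT v v.2

/-- `T` restricted to `K` as a linear isometry into `E`. -/
def opIso (hT : OpPI T) : K →ₗᵢ[ℂ] E :=
  ⟨T ∘ₗ (LinearMap.ker T)ᗮ.subtype, fun v => hT v v.2⟩

lemma opIso_apply (hT : OpPI T) (v : K) : opIso hT v = T v := rfl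

lemma apply_coe_eq_zero_iff (hT : OpPI T) (v : K) : T v = 0 ↔ v = 0 := by
  constructor
  · intro h
    have : ‖(v : E)‖ = 0 := by rw [← norm_apply_coe hT v, h, norm_zero]
    have : (v : E) = 0 := norm_eq_zero.mp this
    exact Subtype.ext this
  · intro h; rw [h]; simp

/-- kernel characterization of powers. -/
lemma pow_succ_eq_zero_iff (hT : OpPI T) (m : ℕ) (x : E) :
    (T ^ (m + 1)) x = 0 ↔ (C ^ m) (P x) = 0 := by
  rw [pow_succ_apply_eq T m x]
  exact apply_coe_eq_zero_iff hT _


local notation "⟪" x ", " y "⟫" => @inner ℂ _ _ x y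

lemma ker_pow_step_iff (hT : OpPI T) (m : ℕ) :
    (LinearMap.ker (T ^ (m+1)) = LinearMap.ker (T ^ (m+2))) ↔
    (LinearMap.ker (C ^ m) = LinearMap.ker (C ^ (m+1))) := by
  have A1 : ∀ (s : ℕ) (v : K), ((C ^ s) v = 0 ↔ (T ^ (s+1)) (v : E) = 0) := by
    intro s v
    rw [pow_succ_eq_zero_iff hT s, proj_apply_of_mem]
  constructor
  · intro h
    ext v
    simp only [LinearMap.mem_ker]
    rw [A1 m v, A1 (m+1) v]
    constructor
    · intro hv
      have : (v : E) ∈ LinearMap.ker (T ^ (m+2)) := h ▸ LinearMap.mem_ker.mpr hv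
      exact LinearMap.mem_ker.mp this
    · intro hv
      have : (v : E) ∈ LinearMap.ker (T ^ (m+1)) := h.symm ▸ LinearMap.mem_ker.mpr hv
      exact LinearMap.mem_ker.mp this
  · intro h
    ext x
    simp only [LinearMap.mem_ker]
    rw [pow_succ_eq_zero_iff hT m x, pow_succ_eq_zero_iff hT (m+1) x]
    constructor
    · intro hv
      have : P x ∈ LinearMap.ker (C ^ (m+1)) := h ▸ LinearMap.mem_ker.mpr hv
      exact LinearMap.mem_ker.mp this
    · intro hv
      have : P x ∈ LinearMap.ker (C ^ m) := h.symm ▸ LinearMap.mem_ker.mpr hv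
      exact LinearMap.mem_ker.mp this

lemma opAscent_comp (hT : OpPI T) (hker : LinearMap.ker T ≠ ⊥) :
    opAscent T = opAscent (opComp T) + 1 := by
  have hpos : 0 < opAscent T := opAscent_pos_of_ker_ne_bot T hker
  obtain ⟨s, hs⟩ : ∃ s, opAscent T = s + 1 := ⟨opAscent T - 1, by omega⟩
  have h1 : LinearMap.ker (T ^ (s+1)) = LinearMap.ker (T ^ (s+2)) := by
    have := opAscent_spec T; rw [hs] at this; exact this
  have h3 : opAscent (opComp T) ≤ s := opAscent_le _ ((ker_pow_step_iff hT s).mp h1)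
  have h4 : opAscent T ≤ opAscent (opComp T) + 1 :=
    opAscent_le _ ((ker_pow_step_iff hT _).mpr (opAscent_spec (opComp T)))
  omega

lemma opPI_pow_succ_iff (hT : OpPI T) (m : ℕ) :
    OpPI (T ^ (m + 1)) ↔ OpPI ((opComp T) ^ m) := by
  constructor
  · intro h v hv
    have hvK : (v : E) ∈ (LinearMap.ker (T ^ (m+1)))ᗮ := by
      rw [Submodule.mem_orthogonal]
      intro x hx
      have hx' : (C ^ m) (P x) = 0 :=
        (pow_succ_eq_zero_iff hT m x).mp (LinearMap.mem_ker.mp hx)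
      have h1 : ⟪x - (P x : E), (v : E)⟫ = 0 := by
        have hmem : x - (P x : E) ∈ Kᗮ := Submodule.sub_starProjection_mem_orthogonal x
        exact (Submodule.mem_orthogonal' _ _).mp hmem (v : E) v.2
      have h2 : ⟪(P x : E), (v : E)⟫ = 0 := by
        have := (Submodule.mem_orthogonal _ _).mp hv (P x) (LinearMap.mem_ker.mpr hx')
        rw [Submodule.coe_inner] at this
        exact this
      have := sub_add_cancel x (P x : E)
      calc ⟪x, (v : E)⟫ = ⟪(x - (P x : E)) + (P x : E), (v : E)⟫ := by rw [sub_add_cancel]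
      _ = ⟪x - (P x : E), (v : E)⟫ + ⟪(P x : E), (v : E)⟫ := inner_add_left _ _ _
      _ = 0 := by rw [h1, h2, add_zero]
    have hn := h (v : E) hvK
    rw [pow_succ_apply_eq T m, proj_apply_of_mem, norm_apply_coe hT] at hn
    exact hn
  · intro h x hx
    have hxK : x ∈ K := by
      have hle : LinearMap.ker T ≤ LinearMap.ker (T ^ (m+1)) := by
        have h' := ker_le_ker_pow_of_le T (show 1 ≤ m+1 by omega)
        rw [pow_one] at h'; exact h'
      exact (Submodule.orthogonal_le hle) hx
    have hv : (⟨x, hxK⟩ : K) ∈ (LinearMap.ker ((opComp T) ^ m))ᗮ := by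
      rw [Submodule.mem_orthogonal]
      intro w hw
      have hwker : (w : E) ∈ LinearMap.ker (T ^ (m+1)) := by
        rw [LinearMap.mem_ker, pow_succ_eq_zero_iff hT m, proj_apply_of_mem]
        exact LinearMap.mem_ker.mp hw
      have h' := (Submodule.mem_orthogonal _ x).mp hx (w : E) hwker
      rw [Submodule.coe_inner]
      exact h'
    have hnorm := h _ hv
    have hPx : P x = (⟨x, hxK⟩ : K) := proj_apply_of_mem T (⟨x, hxK⟩ : K)
    calc ‖(T ^ (m+1)) x‖ = ‖T (((C ^ m) (P x) : E))‖ := by rw [pow_succ_apply_eq]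
    _ = ‖(((C ^ m) (P x) : K) : E)‖ := norm_apply_coe hT _
    _ = ‖(C ^ m) (P x)‖ := rfl
    _ = ‖(P x : K)‖ := by rw [hPx]; exact hPx ▸ hnorm
    _ = ‖x‖ := by rw [hPx]; rfl


variable (T)

/-- map from `ker (opComp T)` into `ker T` -/
def kerMap : (LinearMap.ker (opComp T)) →ₗ[ℂ] (LinearMap.ker T) :=
  LinearMap.codRestrict (LinearMap.ker T)
    ((T ∘ₗ (LinearMap.ker T)ᗮ.subtype) ∘ₗ (LinearMap.ker (opComp T)).subtype)
    (fun v => by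
      have hv : (opComp T) (v : K) = 0 := v.2
      have h1 : P (T (((v : K)) : E)) = 0 := hv
      have h2 : T (((v : K)) : E) ∈ Kᗮ := Submodule.orthogonalProjectionOnto_eq_zero_iff.mp h1
      rw [orthocompl_orthocompl] at h2
      exact h2)

lemma kerMap_coe (v : LinearMap.ker (opComp T)) :
    ((kerMap T v : LinearMap.ker T) : E) = T (((v : K)) : E) := rfl

variable {T}

lemma kerMap_injective (hT : OpPI T) : Function.Injective (kerMap T) := by
  intro v w hvw
  have h1 : T (((v : K)) : E) = T (((w : K)) : E) := by
    have h0 := Subtype.ext_iff.mp hvw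
    rw [kerMap_coe, kerMap_coe] at h0
    exact h0
  have h2 : T ((((v : K) - (w : K))) : E) = 0 := by
    push_cast
    rw [map_sub, h1, sub_self]
  have h3 : (v : K) - (w : K) = 0 := by
    have := (apply_coe_eq_zero_iff hT ((v : K) - (w : K))).mp (by exact_mod_cast h2)
    exact this
  have : (v : K) = (w : K) := by rwa [sub_eq_zero] at h3
  exact Subtype.ext this

lemma finrank_ker_comp_le (hT : OpPI T) :
    Module.finrank ℂ (LinearMap.ker (opComp T)) ≤ Module.finrank ℂ (LinearMap.ker T) :=
  LinearMap.finrank_le_finrank_of_injective (kerMap_injective hT)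

lemma finrank_ker_comp_lt (hT : OpPI T) (hC : ¬ OpPI (opComp T)) :
    Module.finrank ℂ (LinearMap.ker (opComp T)) < Module.finrank ℂ (LinearMap.ker T) := by
  rcases lt_or_eq_of_le (finrank_ker_comp_le hT) with h | h
  · exact h
  exfalso
  apply hC
  -- the range of `kerMap` is everything
  have hrange : LinearMap.range (kerMap T) = ⊤ := by
    apply Submodule.eq_top_of_finrank_eq
    rw [LinearMap.finrank_range_of_inj (kerMap_injective hT)]
    exact h
  intro v hv
  -- v ∈ (ker C)ᗮ; show ‖C v‖ = ‖v‖
  set y : E := T ((v : K) : E) with hy_def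
  have hCv : (opComp T) v = P y := rfl
  have hz : y - ((opComp T v : K) : E) ∈ LinearMap.ker T := by
    have h1 : y - ((P y : K) : E) ∈ Kᗮ := Submodule.sub_starProjection_mem_orthogonal y
    rw [orthocompl_orthocompl] at h1
    rw [hCv]
    exact h1
  obtain ⟨w, hw⟩ : ∃ w, kerMap T w = (⟨y - ((opComp T v : K) : E), hz⟩ : LinearMap.ker T) := by
    have : (⟨y - ((opComp T v : K) : E), hz⟩ : LinearMap.ker T) ∈ LinearMap.range (kerMap T) := by
      rw [hrange]; trivial
    exact this
  have hzw : y - ((opComp T v : K) : E) = T (((w : K)) : E) := by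
    have h0 := Subtype.ext_iff.mp hw
    rw [kerMap_coe] at h0
    exact h0.symm
  -- inner product computations
  have hinner1 : ⟪y, y - ((opComp T v : K) : E)⟫ = 0 := by
    rw [hzw, hy_def]
    have h1 : ⟪T ((v : K) : E), T (((w : K)) : E)⟫ = ⟪(v : K), ((w : K))⟫ := by
      have := (opIso hT).inner_map_map (v : K) ((w : K))
      simpa [opIso_apply] using this
    rw [h1]
    have := (Submodule.mem_orthogonal' _ _).mp hv ((w : K)) w.2
    rw [Submodule.coe_inner] at this ⊢
    exact this
  have hinner2 : ⟪((opComp T v : K) : E), y - ((opComp T v : K) : E)⟫ = 0 := by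
    have hzK : y - ((opComp T v : K) : E) ∈ Kᗮ := by
      rw [orthocompl_orthocompl]; exact hz
    exact (Submodule.mem_orthogonal _ _).mp hzK _ (opComp T v).2
  have hzero : y - ((opComp T v : K) : E) = 0 := by
    have : ⟪y - ((opComp T v : K) : E), y - ((opComp T v : K) : E)⟫ = 0 := by
      rw [inner_sub_left, hinner1, hinner2, sub_zero]
    exact inner_self_eq_zero.mp this
  have hy_eq : ((opComp T v : K) : E) = y := by
    rw [sub_eq_zero] at hzero; exact hzero.symm
  show ‖(opComp T) v‖ = ‖v‖
  calc ‖(opComp T) v‖ = ‖((opComp T v : K) : E)‖ := rfl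
  _ = ‖y‖ := by rw [hy_eq]
  _ = ‖((v : K) : E)‖ := norm_apply_coe hT (v : K)
  _ = ‖v‖ := rfl

end Comp


lemma two_le_finrank_of_opAscent_one {T : E →ₗ[ℂ] E} (h1 : opAscent T = 1)
    (h2 : ¬ OpPI T) : 2 ≤ Module.finrank ℂ E := by
  by_contra hc
  have hn1 : 1 ≤ Module.finrank ℂ E := one_le_finrank_of_not_opPI h2
  have hn : Module.finrank ℂ E = 1 := by omega
  have hker : LinearMap.ker T ≠ ⊥ := ker_ne_bot_of_opAscent_pos T (by omega)
  have hk1 : 1 ≤ Module.finrank ℂ (LinearMap.ker T) := by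
    have h0 : Module.finrank ℂ (LinearMap.ker T) ≠ 0 := fun hc' =>
      hker (Submodule.finrank_eq_zero.mp hc')
    omega
  have hkle := Submodule.finrank_le (LinearMap.ker T)
  have htop : LinearMap.ker T = ⊤ := Submodule.eq_top_of_finrank_eq (by omega)
  apply h2
  intro x hx
  rw [htop, Submodule.top_orthogonal_eq_bot] at hx
  have : x = 0 := hx
  rw [this]
  simp

end Op

theorem opMain (j : ℕ) :
    ∀ (E : Type) [NormedAddCommGroup E] [InnerProductSpace ℂ E] [FiniteDimensional ℂ E]
      (T : E →ₗ[ℂ] E),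
      (∀ i ≤ j, OpPI (T ^ i)) → ¬ OpPI (T ^ (j + 1)) →
      j ≤ opAscent T ∧
      (j = opAscent T → opAscent T + 1 ≤ Module.finrank ℂ E) ∧
      (j < opAscent T → j + opAscent T ≤ Module.finrank ℂ E) ∧
      (opAscent T = j + 1 → j + opAscent T + 1 ≤ Module.finrank ℂ E) ∧
      (1 ≤ j → j < opAscent T → 2 ≤ Module.finrank ℂ (LinearMap.ker T)) := by
  induction j with
  | zero =>
    intro E _ _ _ T hPI hnot
    rw [zero_add, pow_one] at hnot
    refine ⟨Nat.zero_le _, ?_, ?_, ?_, ?_⟩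
    · intro h0
      have h1 := one_le_finrank_of_not_opPI hnot
      omega
    · intro _
      have := opAscent_le_finrank T
      omega
    · intro heq
      have h1 : opAscent T = 1 := by omega
      have h2 := two_le_finrank_of_opAscent_one h1 hnot
      omega
    · omega
  | succ s IH =>
    intro E _ _ _ T hPI hnot
    have hT : OpPI T := by have := hPI 1 (by omega); rwa [pow_one] at this
    have hker : LinearMap.ker T ≠ ⊥ := by
      intro hbot
      exact hnot (opPI_pow_of_ker_eq_bot hT hbot (s + 2))
    have hCPI : ∀ i ≤ s, OpPI ((opComp T) ^ i) := by
      intro i hi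
      exact (opPI_pow_succ_iff hT i).mp (hPI (i+1) (by omega))
    have hCnot : ¬ OpPI ((opComp T) ^ (s + 1)) := by
      intro hc
      exact hnot ((opPI_pow_succ_iff hT (s+1)).mpr hc)
    obtain ⟨hi1, hi2, hi3, hi4, hi5⟩ := IH _ (opComp T) hCPI hCnot
    have hasc : opAscent T = opAscent (opComp T) + 1 := opAscent_comp hT hker
    have hdim : Module.finrank ℂ (LinearMap.ker T) + Module.finrank ℂ ((LinearMap.ker T)ᗮ)
        = Module.finrank ℂ E := Submodule.finrank_add_finrank_orthogonal _
    have hd1 : 1 ≤ Module.finrank ℂ (LinearMap.ker T) := by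
      have h0 : Module.finrank ℂ (LinearMap.ker T) ≠ 0 := fun hc =>
        hker (Submodule.finrank_eq_zero.mp hc)
      omega
    have hd2 : s + 1 < opAscent T → 2 ≤ Module.finrank ℂ (LinearMap.ker T) := by
      intro hlt
      have hsa : s < opAscent (opComp T) := by omega
      rcases Nat.eq_zero_or_pos s with hs0 | hs0
      · subst hs0
        have hCnot' : ¬ OpPI (opComp T) := by
          intro hc
          exact hCnot (by simpa using hc)
        have hlt2 := finrank_ker_comp_lt hT hCnot'
        have hCk : LinearMap.ker (opComp T) ≠ ⊥ :=
          ker_ne_bot_of_opAscent_pos _ (by omega)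
        have hCk1 : 1 ≤ Module.finrank ℂ (LinearMap.ker (opComp T)) := by
          have h0 : Module.finrank ℂ (LinearMap.ker (opComp T)) ≠ 0 := fun hc =>
            hCk (Submodule.finrank_eq_zero.mp hc)
          omega
        omega
      · have h5 := hi5 hs0 hsa
        have hle := finrank_ker_comp_le hT
        omega
    refine ⟨by omega, ?_, ?_, ?_, fun _ h => hd2 h⟩
    · intro heq
      have h2 := hi2 (by omega)
      omega
    · intro hlt
      have h3 := hi3 (by omega)
      have h5 := hd2 hlt
      omega
    · intro heq
      have h4 := hi4 (by omega)
      have h5 := hd2 (by omega)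
      omega

section Bridge

variable {ι : Type} [Fintype ι] [DecidableEq ι]

lemma toEuclideanLin_mul (A B : Matrix ι ι ℂ) :
    Matrix.toEuclideanLin (A * B) =
      (Matrix.toEuclideanLin A) ∘ₗ (Matrix.toEuclideanLin B) := by
  apply LinearMap.ext
  intro x
  simp [Matrix.toEuclideanLin_apply, Matrix.mulVec_mulVec]

lemma toEuclideanLin_pow (A : Matrix ι ι ℂ) (m : ℕ) :
    Matrix.toEuclideanLin (A ^ m) = (Matrix.toEuclideanLin A) ^ m := by
  induction m with
  | zero =>
    rw [pow_zero, pow_zero]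
    apply LinearMap.ext
    intro x
    simp [Matrix.toEuclideanLin_apply, Matrix.one_mulVec]
  | succ m ih =>
    rw [pow_succ, pow_succ, toEuclideanLin_mul, ih]
    rfl


lemma matIsPI_iff_opPI {ι : Type} [Fintype ι] [DecidableEq ι] (A : Matrix ι ι ℂ) (m : ℕ) :
    (A ^ m).IsPartialIsometry ↔ OpPI ((Matrix.toEuclideanLin A) ^ m) := by
  unfold Matrix.IsPartialIsometry OpPI
  rw [toEuclideanLin_pow]

lemma ascent_eq_opAscent {ι : Type} [Fintype ι] [DecidableEq ι] (A : Matrix ι ι ℂ) :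
    A.ascent = opAscent (Matrix.toEuclideanLin A) := by
  unfold Matrix.ascent opAscent
  congr 1
  ext m
  simp only [Set.mem_setOf_eq, toEuclideanLin_pow]

lemma pIndex_extract {ι : Type} [Fintype ι] [DecidableEq ι] (A : Matrix ι ι ℂ) {j : ℕ}
    (hp : A.pIndex = (j : ℕ∞)) :
    (∀ i ≤ j, (A ^ i).IsPartialIsometry) ∧ ¬ (A ^ (j + 1)).IsPartialIsometry := by
  set S := {j : ℕ | ∀ i ≤ j, (A ^ i).IsPartialIsometry} with hS
  have hpeq : A.pIndex = sSup ((↑) '' S : Set ℕ∞) := rfl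
  have hub : ∀ s ∈ S, s ≤ j := by
    intro s hs
    have h1 : (s : ℕ∞) ≤ A.pIndex := le_sSup ⟨s, hs, rfl⟩
    rw [hp] at h1
    exact_mod_cast h1
  have h0 : (0 : ℕ) ∈ S := by
    intro i hi
    have hi0 : i = 0 := by omega
    subst hi0
    rw [matIsPI_iff_opPI, pow_zero]
    exact opPI_one
  have hjS : j ∈ S := by
    rcases Nat.eq_zero_or_pos j with h | h
    · subst h; exact h0
    · by_contra hj
      have hub2 : ∀ x ∈ ((↑) '' S : Set ℕ∞), x ≤ ((j - 1 : ℕ) : ℕ∞) := by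
        rintro x ⟨s, hs, rfl⟩
        have h1 : s ≤ j := hub s hs
        have h2 : s ≠ j := fun h' => hj (h' ▸ hs)
        exact_mod_cast (by omega : s ≤ j - 1)
      have h3 := sSup_le hub2
      rw [← hpeq, hp] at h3
      have h4 : j ≤ j - 1 := by exact_mod_cast h3
      omega
  have hjs : (j + 1) ∉ S := by
    intro hmem
    have := hub (j + 1) hmem
    omega
  refine ⟨hjS, ?_⟩
  intro hPI
  apply hjs
  intro i hi
  rcases Nat.lt_or_ge i (j + 1) with h | h
  · exact hjS i (by omega)
  · have hi1 : i = j + 1 := by omega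
    subst hi1
    exact hPI

end Bridge

/-- If `A` is an `n`-by-`n` complex matrix with `p(A)` finite, say `p(A) = j` and `a(A) = k`,
then (a) `j = k ≤ n - 1`, (b) `j ≤ k - 1` and `j + k ≤ n - 1`, or (c) `j ≤ k - 2` and
`j + k = n`. -/
theorem pIndex_ascent_trichotomy (n : ℕ) (hn : 0 < n) (A : Matrix (Fin n) (Fin n) ℂ)
    (j k : ℕ) (hp : A.pIndex = (j : ℕ∞)) (ha : A.ascent = k) :
    (j = k ∧ j ≤ n - 1) ∨ (j + 1 ≤ k ∧ j + k ≤ n - 1) ∨ (j + 2 ≤ k ∧ j + k = n) := by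
  obtain ⟨hPI, hnot⟩ := pIndex_extract A hp
  have hPI' : ∀ i ≤ j, OpPI ((Matrix.toEuclideanLin A) ^ i) :=
    fun i hi => (matIsPI_iff_opPI A i).mp (hPI i hi)
  have hnot' : ¬ OpPI ((Matrix.toEuclideanLin A) ^ (j + 1)) :=
    fun h => hnot ((matIsPI_iff_opPI A (j + 1)).mpr h)
  obtain ⟨h1, h2, h3, h4, _⟩ :=
    opMain j (EuclideanSpace ℂ (Fin n)) (Matrix.toEuclideanLin A) hPI' hnot'
  have hk : opAscent (Matrix.toEuclideanLin A) = k := by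
    rw [← ascent_eq_opAscent]; exact ha
  have hfr : Module.finrank ℂ (EuclideanSpace ℂ (Fin n)) = n := finrank_euclideanSpace_fin
  rw [hk] at h1 h2 h3 h4
  rw [hfr] at h2 h3 h4
  by_cases hjk : j = k
  · have := h2 (by omega)
    left
    exact ⟨hjk, by omega⟩
  · have hjk' : j < k := by omega
    by_cases hk1 : k = j + 1
    · have := h4 (by omega)
      right; left
      exact ⟨by omega, by omega⟩
    · by_cases heq : j + k = n
      · right; right
        exact ⟨by omega, heq⟩
      · have := h3 (by omega)
        right; left
        exact ⟨by omega, by omega⟩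

end

end
end

section
/- Let n be a positive integer and j, k nonnegative integers with j ≤ k − 1 and j + k ≤ n − 1. Then there exists an n-by-n complex matrix A with p(A) = j and a(A) = k. -/
open Matrix

noncomputable section

namespace PfAux

variable {n : ℕ}

local notation "E" => EuclideanSpace ℂ (Fin n)

/-- coordinate subspace : vectors vanishing on P -/
def coordSub (n : ℕ) (P : Fin n → Prop) : Submodule ℂ (EuclideanSpace ℂ (Fin n)) where
  carrier := {y | ∀ b, P b → y b = 0}
  add_mem' := by
    intro x y hx hy b hb
    have : (x + y) b = x b + y b := rfl
    rw [this, hx b hb, hy b hb, add_zero]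
  zero_mem' := by intro b _; rfl
  smul_mem' := by
    intro c x hx b hb
    have : (c • x) b = c * x b := rfl
    rw [this, hx b hb, mul_zero]

lemma mem_coordSub {P : Fin n → Prop} {y : EuclideanSpace ℂ (Fin n)} :
    y ∈ coordSub n P ↔ ∀ b, P b → y b = 0 := Iff.rfl

lemma coordSub_congr {P P' : Fin n → Prop} (h : ∀ b, P b ↔ P' b) :
    coordSub n P = coordSub n P' := by
  ext y
  simp only [mem_coordSub]
  exact ⟨fun hy b hb => hy b ((h b).2 hb), fun hy b hb => hy b ((h b).1 hb)⟩

lemma single_mem_coordSub {P : Fin n → Prop} {b : Fin n} (hb : ¬ P b) :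
    (EuclideanSpace.single b (1:ℂ)) ∈ coordSub n P := by
  intro b' hb'
  rw [EuclideanSpace.single_apply]
  have : b' ≠ b := fun h => hb (h ▸ hb')
  simp [this]

lemma coordSub_orth (P : Fin n → Prop) :
    (coordSub n P)ᗮ = coordSub n (fun b => ¬ P b) := by
  apply le_antisymm
  · intro y hy b hb
    have h0 := (Submodule.mem_orthogonal _ y).1 hy _ (single_mem_coordSub hb)
    rw [PiLp.inner_apply] at h0
    simp only [EuclideanSpace.single_apply] at h0
    rw [Finset.sum_eq_single b] at h0
    · simpa using h0
    · intro c _ hc; simp [hc]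
    · simp
  · intro y hy
    rw [Submodule.mem_orthogonal]
    intro u hu
    rw [PiLp.inner_apply]
    apply Finset.sum_eq_zero
    intro c _
    by_cases hc : P c
    · rw [hu c hc]; simp
    · rw [hy c hc]; simp

end PfAux

namespace PfAux

variable {n : ℕ} (N : Matrix (Fin n) (Fin n) ℂ)

def col (b : Fin n) : EuclideanSpace ℂ (Fin n) :=
  Matrix.toEuclideanLin N (EuclideanSpace.single b 1)

lemma col_apply (b a : Fin n) : col N b a = N a b := by
  show (Matrix.toEuclideanLin N (EuclideanSpace.single b 1)) a = N a b
  rw [Matrix.toEuclideanLin_apply]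
  show ∑ c, N a c * (EuclideanSpace.single b (1:ℂ)) c = N a b
  simp [EuclideanSpace.single_apply]

lemma map_eq_sum_col (y : EuclideanSpace ℂ (Fin n)) :
    Matrix.toEuclideanLin N y = ∑ b, y b • col N b := by
  have hy : y = ∑ b, y b • EuclideanSpace.single b (1:ℂ) := by
    ext a
    rw [WithLp.ofLp_sum, Finset.sum_apply]
    simp [EuclideanSpace.single_apply]
  conv_lhs => rw [hy]
  rw [map_sum]
  simp [col]

variable {N}

lemma norm_sq_map (horth : ∀ b b' : Fin n, b ≠ b' → (inner ℂ (col N b) (col N b') : ℂ) = 0)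
    (y : EuclideanSpace ℂ (Fin n)) :
    ‖Matrix.toEuclideanLin N y‖^2 = ∑ b, Complex.normSq (y b) * ‖col N b‖^2 := by
  have h1 : (inner ℂ (Matrix.toEuclideanLin N y) (Matrix.toEuclideanLin N y) : ℂ)
      = ∑ b, ((Complex.normSq (y b) * ‖col N b‖^2 : ℝ) : ℂ) := by
    rw [map_eq_sum_col N y, sum_inner]
    refine Finset.sum_congr rfl fun b _ => ?_
    rw [inner_smul_left, inner_sum]
    rw [Finset.sum_eq_single b]
    · rw [inner_smul_right, inner_self_eq_norm_sq_to_K]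
      rw [← mul_assoc, mul_comm ((starRingEnd ℂ) (y b)) (y b), Complex.mul_conj]
      push_cast
      rfl
    · intro c _ hc
      rw [inner_smul_right, horth b c (Ne.symm hc), mul_zero]
    · simp
  have h2 : (inner ℂ (Matrix.toEuclideanLin N y) (Matrix.toEuclideanLin N y) : ℂ)
      = ((‖Matrix.toEuclideanLin N y‖^2 : ℝ) : ℂ) := by
    rw [inner_self_eq_norm_sq_to_K]
    push_cast
    rfl
  rw [h2, ← Complex.ofReal_sum] at h1
  exact_mod_cast h1

lemma ker_eq_coordSub (horth : ∀ b b' : Fin n, b ≠ b' → (inner ℂ (col N b) (col N b') : ℂ) = 0) :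
    LinearMap.ker (Matrix.toEuclideanLin N) = coordSub n (fun b => col N b ≠ 0) := by
  ext y
  rw [LinearMap.mem_ker, mem_coordSub]
  constructor
  · intro h0 b hb
    have h1 : ‖Matrix.toEuclideanLin N y‖^2 = 0 := by rw [h0]; simp
    rw [norm_sq_map horth] at h1
    have h2 : ∀ b ∈ Finset.univ (α := Fin n), (0:ℝ) ≤ Complex.normSq (y b) * ‖col N b‖^2 := by
      intro b _; exact mul_nonneg (Complex.normSq_nonneg _) (sq_nonneg _)
    have h3 := (Finset.sum_eq_zero_iff_of_nonneg h2).1 h1 b (Finset.mem_univ b)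
    rcases mul_eq_zero.1 h3 with h | h
    · exact Complex.normSq_eq_zero.1 h
    · exact absurd (norm_eq_zero.1 (pow_eq_zero_iff (n := 2) (by norm_num) |>.1 h)) hb
  · intro h
    have h1 : ‖Matrix.toEuclideanLin N y‖^2 = 0 := by
      rw [norm_sq_map horth]
      apply Finset.sum_eq_zero
      intro b _
      by_cases hb : col N b = 0
      · simp [hb]
      · rw [h b hb]; simp
    have := pow_eq_zero_iff (n := 2) (by norm_num) |>.1 h1
    exact norm_eq_zero.1 this

lemma isPartialIsometry_of (horth : ∀ b b' : Fin n, b ≠ b' → (inner ℂ (col N b) (col N b') : ℂ) = 0)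
    (hnorm : ∀ b, col N b = 0 ∨ ‖col N b‖ = 1) :
    N.IsPartialIsometry := by
  intro y hy
  rw [ker_eq_coordSub horth, coordSub_orth] at hy
  have hsupp : ∀ b, col N b = 0 → y b = 0 := by
    intro b hb
    exact hy b (by simp [hb])
  have h1 : ‖Matrix.toEuclideanLin N y‖^2 = ‖y‖^2 := by
    rw [norm_sq_map horth]
    have h2 : ‖y‖^2 = ∑ b, Complex.normSq (y b) := by
      rw [EuclideanSpace.norm_eq, Real.sq_sqrt (by positivity)]
      refine Finset.sum_congr rfl fun b _ => ?_
      rw [Complex.normSq_eq_norm_sq]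
    rw [h2]
    refine Finset.sum_congr rfl fun b _ => ?_
    rcases hnorm b with hb | hb
    · rw [hsupp b hb, hb]; simp
    · rw [hb]; simp
  have := congrArg Real.sqrt h1
  rwa [Real.sqrt_sq (norm_nonneg _), Real.sqrt_sq (norm_nonneg _)] at this



def rc : ℂ := ((Real.sqrt 2⁻¹ : ℝ) : ℂ)

lemma rc_ne_zero : rc ≠ 0 := by
  simp only [rc, ne_eq, Complex.ofReal_eq_zero]
  positivity

lemma norm_rc_pow (e : ℕ) : ‖rc ^ e‖ ^ 2 = (2⁻¹ : ℝ) ^ e := by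
  rw [norm_pow, rc, Complex.norm_real, Real.norm_eq_abs,
    abs_of_nonneg (Real.sqrt_nonneg _), ← pow_mul, mul_comm, pow_mul,
    Real.sq_sqrt (by norm_num)]

/-- the building-block matrix: `Mat n j k 1` is our example `A`, and `Mat n j k i = A ^ i`. -/
def Mat (n j k i : ℕ) : Matrix (Fin n) (Fin n) ℂ :=
  Matrix.of fun a b =>
    if (b : ℕ) = j then
      (if (a : ℕ) = j then rc ^ i
       else if (a : ℕ) < j ∧ j ≤ (a : ℕ) + i then rc ^ (i + 1 - (j - (a : ℕ))) else 0)
    else if (a : ℕ) + i = (b : ℕ) ∧ ((b : ℕ) < j ∨ (j + 1 + i ≤ (b : ℕ) ∧ (b : ℕ) ≤ j + k))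
      then 1 else 0

lemma sum_delta {n : ℕ} {M : Type*} [AddCommMonoid M] (h : Fin n → M) (t : ℕ) (ht : t < n) :
    (∑ c : Fin n, if (c : ℕ) = t then h c else 0) = h ⟨t, ht⟩ := by
  rw [Finset.sum_eq_single (⟨t, ht⟩ : Fin n)]
  · simp
  · intro c _ hc
    have : (c : ℕ) ≠ t := fun hh => hc (Fin.ext hh)
    simp [this]
  · simp


lemma Mat_mul (n j k i : ℕ) (hjn : j < n) :
    Mat n j k i * Mat n j k 1 = Mat n j k (i + 1) := by
  ext a b
  rw [Matrix.mul_apply]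
  by_cases hbj : (b : ℕ) = j
  · -- column j
    have hcol : ∀ c : Fin n, Mat n j k 1 c b =
        (if (c : ℕ) = j then rc else 0) + (if 1 ≤ j ∧ (c : ℕ) = j - 1 then rc else 0) := by
      intro c
      simp only [Mat, Matrix.of_apply, hbj, if_pos rfl]
      split_ifs <;> first
        | (exfalso; omega)
        | (rw [pow_one, add_zero])
        | (rw [show 1 + 1 - (j - (c : ℕ)) = 1 from by omega, pow_one, zero_add])
        | simp
    calc (∑ c, Mat n j k i a c * Mat n j k 1 c b)
        = (∑ c : Fin n, ((if (c : ℕ) = j then Mat n j k i a c * rc else 0)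
            + if 1 ≤ j then (if (c : ℕ) = j - 1 then Mat n j k i a c * rc else 0) else 0)) := by
          refine Finset.sum_congr rfl fun c _ => ?_
          rw [hcol c, mul_add]
          congr 1
          · split_ifs <;> simp
          · split_ifs <;> simp_all
      _ = Mat n j k i a ⟨j, hjn⟩ * rc
            + (if 1 ≤ j then Mat n j k i a ⟨j - 1, by omega⟩ * rc else 0) := by
          rw [Finset.sum_add_distrib, sum_delta (fun c => Mat n j k i a c * rc) j hjn]
          congr 1
          split_ifs with h1
          · rw [sum_delta (fun c => Mat n j k i a c * rc) (j-1) (by omega)]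
          · simp
      _ = Mat n j k (i + 1) a b := by
          simp only [Mat, Matrix.of_apply, hbj, if_pos rfl]
          split_ifs <;> first
            | (exfalso; omega)
            | (rw [show i + 1 + 1 - (j - (a : ℕ)) = (i + 1 - (j - (a : ℕ))) + 1 from by omega,
                pow_succ]; ring1)
            | (rw [show i + 1 + 1 - (j - (a : ℕ)) = 1 from by omega, pow_one]; ring1)
            | (simp [pow_succ]; done)
  · -- column b ≠ j
    have hcol : ∀ c : Fin n, Mat n j k 1 c b =
        (if ((c : ℕ) = (b : ℕ) - 1) ∧ (1 ≤ (b : ℕ) ∧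
          ((b : ℕ) < j ∨ (j + 2 ≤ (b : ℕ) ∧ (b : ℕ) ≤ j + k))) then 1 else 0) := by
      intro c
      simp only [Mat, Matrix.of_apply, if_neg hbj]
      split_ifs <;> first | rfl | (exfalso; omega)
    by_cases hC : 1 ≤ (b : ℕ) ∧ ((b : ℕ) < j ∨ (j + 2 ≤ (b : ℕ) ∧ (b : ℕ) ≤ j + k))
    · calc (∑ c, Mat n j k i a c * Mat n j k 1 c b)
          = (∑ c : Fin n, if (c : ℕ) = (b : ℕ) - 1 then Mat n j k i a c else 0) := by
            refine Finset.sum_congr rfl fun c _ => ?_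
            rw [hcol c]
            split_ifs <;> simp_all
        _ = Mat n j k i a ⟨(b : ℕ) - 1, by omega⟩ := by
            rw [sum_delta (fun c => Mat n j k i a c) ((b : ℕ) - 1) (by omega)]
        _ = Mat n j k (i + 1) a b := by
            simp only [Mat, Matrix.of_apply, if_neg hbj]
            rw [if_neg (show ¬((⟨(b : ℕ) - 1, by omega⟩ : Fin n) : ℕ) = j from by
              simp only []; omega)]
            split_ifs <;> first | rfl | (exfalso; omega)
    · calc (∑ c, Mat n j k i a c * Mat n j k 1 c b)
          = 0 := by
            apply Finset.sum_eq_zero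
            intro c _
            rw [hcol c, if_neg (by tauto), mul_zero]
        _ = Mat n j k (i + 1) a b := by
            simp only [Mat, Matrix.of_apply, if_neg hbj]
            rw [if_neg (by omega)]


lemma Mat_pow (n j k : ℕ) (hjn : j < n) (i : ℕ) (hi : 1 ≤ i) :
    Mat n j k 1 ^ i = Mat n j k i := by
  induction i with
  | zero => omega
  | succ i ih =>
    rcases Nat.eq_or_lt_of_le hi with h1 | h1
    · rw [← h1, pow_one]
    · have hi' : 1 ≤ i := by omega
      rw [pow_succ, ih hi', Mat_mul n j k i hjn]

/-- the index set where the columns of `Mat n j k i` are nonzero -/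
def Q (j k i m : ℕ) : Prop :=
  m = j ∨ (i ≤ m ∧ m < j) ∨ (j + 1 + i ≤ m ∧ m ≤ j + k)


section ColStruct

variable {n : ℕ} (j k : ℕ)

lemma horth_Mat (i : ℕ) :
    ∀ b b' : Fin n, b ≠ b' →
      (inner ℂ (col (Mat n j k i) b) (col (Mat n j k i) b') : ℂ) = 0 := by
  intro b b' hbb
  rw [PiLp.inner_apply]
  apply Finset.sum_eq_zero
  intro a _
  simp only [col_apply]
  have hvv : (b : ℕ) ≠ (b' : ℕ) := fun h => hbb (Fin.ext h)
  simp only [Mat, Matrix.of_apply]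
  split_ifs <;> first
    | (exfalso; omega)
    | simp

lemma col_Mat_eq_zero (i : ℕ) (b : Fin n) (hb : ¬ Q j k i (b : ℕ)) :
    col (Mat n j k i) b = 0 := by
  ext a
  rw [col_apply]
  show Mat n j k i a b = 0
  simp only [Mat, Matrix.of_apply, Q] at *
  split_ifs <;> first | (exfalso; omega) | rfl

lemma col_Mat_ne_zero (i : ℕ) (b : Fin n) (hb : Q j k i (b : ℕ)) :
    col (Mat n j k i) b ≠ 0 := by
  simp only [Q] at hb
  intro h0
  rcases hb with hb | hb | hb
  · have h1 : col (Mat n j k i) b ⟨j, by omega⟩ = 0 := by rw [h0]; rfl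
    rw [col_apply] at h1
    simp only [Mat, Matrix.of_apply, hb, if_true, eq_self_iff_true] at h1
    exact pow_ne_zero i rc_ne_zero h1
  · have h1 : col (Mat n j k i) b ⟨(b : ℕ) - i, by omega⟩ = 0 := by rw [h0]; rfl
    rw [col_apply] at h1
    simp only [Mat, Matrix.of_apply] at h1
    rw [if_neg (by omega), if_pos (by constructor <;> omega)] at h1
    exact one_ne_zero h1
  · have h1 : col (Mat n j k i) b ⟨(b : ℕ) - i, by omega⟩ = 0 := by rw [h0]; rfl
    rw [col_apply] at h1
    simp only [Mat, Matrix.of_apply] at h1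
    rw [if_neg (by omega), if_pos (by constructor <;> omega)] at h1
    exact one_ne_zero h1

lemma ker_Mat (i : ℕ) :
    LinearMap.ker (Matrix.toEuclideanLin (Mat n j k i))
      = coordSub n (fun b => Q j k i (b : ℕ)) := by
  rw [ker_eq_coordSub (horth_Mat j k i)]
  apply coordSub_congr
  intro b
  constructor
  · intro h
    by_contra hb
    exact h (col_Mat_eq_zero j k i b hb)
  · intro h
    exact col_Mat_ne_zero j k i b h

end ColStruct


lemma geo (q : ℕ) : ∑ m ∈ Finset.range q, ((2:ℝ)⁻¹) ^ (m + 1) = 1 - (2⁻¹ : ℝ) ^ q := by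
  induction q with
  | zero => simp
  | succ q ih => rw [Finset.sum_range_succ, ih, pow_succ]; ring

section Norms

variable {n : ℕ} (j k : ℕ)

lemma norm_sq_colj (i : ℕ) (b : Fin n) (hb : (b : ℕ) = j) :
    ∑ a : Fin n, ‖col (Mat n j k i) b a‖ ^ 2
      = ∑ m ∈ Finset.range n,
          (if m = j then ((2:ℝ)⁻¹) ^ i
           else if m < j ∧ j ≤ m + i then ((2:ℝ)⁻¹) ^ (i + 1 - (j - m)) else 0) := by
  rw [← Fin.sum_univ_eq_sum_range]
  refine Finset.sum_congr rfl fun a _ => ?_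
  rw [col_apply]
  show ‖Mat n j k i a b‖ ^ 2 = _
  simp only [Mat, Matrix.of_apply, hb, if_true, eq_self_iff_true]
  split_ifs with h1 h2
  · exact norm_rc_pow i
  · exact norm_rc_pow _
  · simp

lemma range_trunc (j q : ℕ) (hjn : j < q) (F : ℕ → ℝ)
    (hF : ∀ m, j < m → F m = 0) :
    ∑ m ∈ Finset.range q, F m = ∑ m ∈ Finset.range (j + 1), F m := by
  exact (Finset.sum_subset (Finset.range_subset_range.2 (by omega))
    (fun x hx hnx => hF x (by simp only [Finset.mem_range] at *; omega))).symm

lemma norm_colj_one (i : ℕ) (hi : 1 ≤ i) (hij : i ≤ j) (hjn : j < n) (b : Fin n)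
    (hb : (b : ℕ) = j) : ‖col (Mat n j k i) b‖ = 1 := by
  rw [EuclideanSpace.norm_eq]
  have h1 : ∑ a : Fin n, ‖col (Mat n j k i) b a‖ ^ 2 = 1 := by
    rw [norm_sq_colj j k i b hb]
    rw [range_trunc j n hjn _ (by intro m hm; rw [if_neg (by omega), if_neg (by omega)])]
    rw [Finset.sum_range_succ, if_pos rfl]
    have h2 : ∑ m ∈ Finset.range j,
        (if m = j then ((2:ℝ)⁻¹) ^ i
         else if m < j ∧ j ≤ m + i then ((2:ℝ)⁻¹) ^ (i + 1 - (j - m)) else 0)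
        = ∑ m ∈ Finset.range j, (if m < i then ((2:ℝ)⁻¹) ^ (i - m) else 0) := by
      rw [← Finset.sum_range_reflect]
      refine Finset.sum_congr rfl fun m hm => ?_
      have hm' := Finset.mem_range.1 hm
      rw [if_neg (by omega)]
      split_ifs with h1 h2 <;> first | (exfalso; omega) | (congr 1; omega) | rfl
    rw [h2]
    have h3 : ∑ m ∈ Finset.range j, (if m < i then ((2:ℝ)⁻¹) ^ (i - m) else 0)
        = ∑ m ∈ Finset.range i, ((2:ℝ)⁻¹) ^ (i - m) := by
      rw [← Finset.sum_subset (Finset.range_subset_range.2 hij)]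
      · refine Finset.sum_congr rfl fun m hm => ?_
        rw [if_pos (Finset.mem_range.1 hm)]
      · intro x hx hnx
        rw [if_neg (by simp only [Finset.mem_range] at *; omega)]
    rw [h3]
    have h4 : ∑ m ∈ Finset.range i, ((2:ℝ)⁻¹) ^ (i - m)
        = ∑ m ∈ Finset.range i, ((2:ℝ)⁻¹) ^ (m + 1) := by
      rw [← Finset.sum_range_reflect]
      refine Finset.sum_congr rfl fun m hm => ?_
      congr 1
      have hm' := Finset.mem_range.1 hm
      omega
    rw [h4, geo]
    ring
  rw [h1, Real.sqrt_one]

lemma norm_colj_half (hjn : j < n) (b : Fin n) (hb : (b : ℕ) = j) :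
    ‖col (Mat n j k (j + 1)) b‖ = Real.sqrt 2⁻¹ := by
  rw [EuclideanSpace.norm_eq]
  have h1 : ∑ a : Fin n, ‖col (Mat n j k (j + 1)) b a‖ ^ 2 = 2⁻¹ := by
    rw [norm_sq_colj j k (j + 1) b hb]
    rw [range_trunc j n hjn _ (by intro m hm; rw [if_neg (by omega), if_neg (by omega)])]
    rw [Finset.sum_range_succ, if_pos rfl]
    have h2 : ∑ m ∈ Finset.range j,
        (if m = j then ((2:ℝ)⁻¹) ^ (j + 1)
         else if m < j ∧ j ≤ m + (j + 1) then ((2:ℝ)⁻¹) ^ (j + 1 + 1 - (j - m)) else 0)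
        = ∑ m ∈ Finset.range j, ((2:ℝ)⁻¹) ^ (m + 1) * 2⁻¹ := by
      refine Finset.sum_congr rfl fun m hm => ?_
      have hm' := Finset.mem_range.1 hm
      rw [if_neg (by omega), if_pos (by omega), show j + 1 + 1 - (j - m) = (m + 1) + 1 from by
        omega, pow_succ]
    rw [h2, ← Finset.sum_mul, geo, pow_succ]
    ring
  rw [h1]

lemma hnorm_Mat (i : ℕ) (hi : 1 ≤ i) (hij : i ≤ j) (hjn : j < n) :
    ∀ b : Fin n, col (Mat n j k i) b = 0 ∨ ‖col (Mat n j k i) b‖ = 1 := by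
  intro b
  by_cases hQ : Q j k i (b : ℕ)
  · right
    rcases hQ with hb | hb | hb
    · exact norm_colj_one j k i hi hij hjn b hb
    · rw [EuclideanSpace.norm_eq]
      have h1 : ∑ a : Fin n, ‖col (Mat n j k i) b a‖ ^ 2 = 1 := by
        have h2 : ∀ a : Fin n, ‖col (Mat n j k i) b a‖ ^ 2
            = (if (a : ℕ) = (b : ℕ) - i then (1:ℝ) else 0) := by
          intro a
          rw [col_apply]
          show ‖Mat n j k i a b‖ ^ 2 = _
          simp only [Mat, Matrix.of_apply]
          rw [if_neg (by omega)]
          split_ifs <;> first | (exfalso; omega) | simp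
        calc ∑ a : Fin n, ‖col (Mat n j k i) b a‖ ^ 2
            = ∑ a : Fin n, (if (a : ℕ) = (b : ℕ) - i then (1:ℝ) else 0) :=
              Finset.sum_congr rfl fun a _ => h2 a
          _ = 1 := sum_delta (fun _ => (1:ℝ)) ((b : ℕ) - i) (by omega)
      rw [h1, Real.sqrt_one]
    · rw [EuclideanSpace.norm_eq]
      have h1 : ∑ a : Fin n, ‖col (Mat n j k i) b a‖ ^ 2 = 1 := by
        have h2 : ∀ a : Fin n, ‖col (Mat n j k i) b a‖ ^ 2
            = (if (a : ℕ) = (b : ℕ) - i then (1:ℝ) else 0) := by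
          intro a
          rw [col_apply]
          show ‖Mat n j k i a b‖ ^ 2 = _
          simp only [Mat, Matrix.of_apply]
          rw [if_neg (by omega)]
          split_ifs <;> first | (exfalso; omega) | simp
        calc ∑ a : Fin n, ‖col (Mat n j k i) b a‖ ^ 2
            = ∑ a : Fin n, (if (a : ℕ) = (b : ℕ) - i then (1:ℝ) else 0) :=
              Finset.sum_congr rfl fun a _ => h2 a
          _ = 1 := sum_delta (fun _ => (1:ℝ)) ((b : ℕ) - i) (by omega)
      rw [h1, Real.sqrt_one]
  · left
    exact col_Mat_eq_zero j k i b hQ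

end Norms


section Final

variable {n : ℕ} (j k : ℕ)

lemma one_isPartialIsometry : (1 : Matrix (Fin n) (Fin n) ℂ).IsPartialIsometry := by
  intro x _
  congr 1
  rw [Matrix.toEuclideanLin_apply, Matrix.one_mulVec]

lemma pow_isPartialIsometry (hjn : j < n) (i : ℕ) (hij : i ≤ j) :
    ((Mat n j k 1) ^ i).IsPartialIsometry := by
  rcases Nat.eq_zero_or_pos i with h0 | h0
  · rw [h0, pow_zero]; exact one_isPartialIsometry
  · rw [Mat_pow n j k hjn i h0]
    exact isPartialIsometry_of (horth_Mat j k i) (hnorm_Mat j k i h0 hij hjn)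

lemma pow_succ_not_isPartialIsometry (hjn : j < n) :
    ¬ ((Mat n j k 1) ^ (j + 1)).IsPartialIsometry := by
  rw [Mat_pow n j k hjn (j + 1) (by omega)]
  intro hPI
  set N := Mat n j k (j + 1) with hN
  set x : EuclideanSpace ℂ (Fin n) := EuclideanSpace.single ⟨j, hjn⟩ 1 with hx
  have hxmem : x ∈ (LinearMap.ker (Matrix.toEuclideanLin N))ᗮ := by
    rw [ker_Mat j k (j + 1), coordSub_orth]
    intro b hb
    rw [hx, EuclideanSpace.single_apply]
    have : b ≠ ⟨j, hjn⟩ := by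
      intro h
      exact hb (Or.inl (by rw [h]))
    simp [this]
  have heq := hPI x hxmem
  have h1 : Matrix.toEuclideanLin N x = col N ⟨j, hjn⟩ := rfl
  rw [h1] at heq
  rw [norm_colj_half j k hjn ⟨j, hjn⟩ rfl] at heq
  rw [hx, EuclideanSpace.norm_single, norm_one] at heq
  have h2 : (Real.sqrt 2⁻¹) ^ 2 = 1 := by rw [heq]; norm_num
  rw [Real.sq_sqrt (by norm_num)] at h2
  norm_num at h2

lemma pIndex_eq (hjn : j < n) : ((Mat n j k 1)).pIndex = (j : ℕ∞) := by
  have hT : {i : ℕ | ∀ i' ≤ i, ((Mat n j k 1) ^ i').IsPartialIsometry} = Set.Iic j := by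
    ext m
    simp only [Set.mem_setOf_eq, Set.mem_Iic]
    constructor
    · intro hm
      by_contra hc
      exact pow_succ_not_isPartialIsometry j k hjn (hm (j + 1) (by omega))
    · intro hm i' hi'
      exact pow_isPartialIsometry j k hjn i' (le_trans hi' hm)
  rw [Matrix.pIndex, hT]
  apply le_antisymm
  · apply sSup_le
    rintro m ⟨i, hi, rfl⟩
    exact_mod_cast hi
  · exact le_sSup ⟨j, by simp⟩

lemma ascent_eq (hjk : j + 1 ≤ k) (hkn : j + k < n) : ((Mat n j k 1)).ascent = k := by
  have hjn : j < n := by omega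
  set S := {m : ℕ | LinearMap.ker (Matrix.toEuclideanLin ((Mat n j k 1) ^ m)) =
    LinearMap.ker (Matrix.toEuclideanLin ((Mat n j k 1) ^ (m + 1)))} with hS
  have hkS : k ∈ S := by
    show LinearMap.ker _ = LinearMap.ker _
    rw [Mat_pow n j k hjn k (by omega), Mat_pow n j k hjn (k + 1) (by omega),
      ker_Mat j k k, ker_Mat j k (k + 1)]
    apply coordSub_congr
    intro b
    simp only [Q]
    omega
  have hnotS : ∀ m, m < k → m ∉ S := by
    intro m hm hmS
    have hidx : j + 1 + m < n := by omega
    set w : EuclideanSpace ℂ (Fin n) := EuclideanSpace.single ⟨j + 1 + m, hidx⟩ 1 with hw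
    have hw1 : w ∈ LinearMap.ker (Matrix.toEuclideanLin ((Mat n j k 1) ^ (m + 1))) := by
      rw [Mat_pow n j k hjn (m + 1) (by omega), ker_Mat j k (m + 1)]
      intro b hb
      rw [hw, EuclideanSpace.single_apply]
      have : b ≠ ⟨j + 1 + m, hidx⟩ := by
        intro h
        subst h
        simp only [Q] at hb
        omega
      simp [this]
    have hw2 : w ∉ LinearMap.ker (Matrix.toEuclideanLin ((Mat n j k 1) ^ m)) := by
      rcases Nat.eq_zero_or_pos m with h0 | h0
      · rw [h0, pow_zero]
        intro hker
        rw [LinearMap.mem_ker] at hker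
        have : (Matrix.toEuclideanLin (1 : Matrix (Fin n) (Fin n) ℂ)) w = w := by
          rw [Matrix.toEuclideanLin_apply, Matrix.one_mulVec]
        rw [this] at hker
        have : w ⟨j + 1 + m, hidx⟩ = 0 := by rw [hker]; rfl
        rw [hw, EuclideanSpace.single_apply, if_pos rfl] at this
        exact one_ne_zero this
      · rw [Mat_pow n j k hjn m h0, ker_Mat j k m]
        intro hker
        have : w ⟨j + 1 + m, hidx⟩ = 0 := hker _ (by simp only [Q]; omega)
        rw [hw, EuclideanSpace.single_apply, if_pos rfl] at this
        exact one_ne_zero this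
    have hmS' : LinearMap.ker (Matrix.toEuclideanLin ((Mat n j k 1) ^ m)) =
        LinearMap.ker (Matrix.toEuclideanLin ((Mat n j k 1) ^ (m + 1))) := hmS
    rw [hmS'] at hw2
    exact hw2 hw1
  have hSne : S.Nonempty := ⟨k, hkS⟩
  apply le_antisymm
  · exact Nat.sInf_le hkS
  · rcases lt_or_ge (sInf S) k with h | h
    · exact absurd (Nat.sInf_mem hSne) (hnotS _ h)
    · exact h

end Final

end PfAux



/-- If `j ≤ k - 1` and `j + k ≤ n - 1`, then there is an `n`-by-`n` complex matrix `A` with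
`p(A) = j` and `a(A) = k`. -/
theorem exists_matrix_pIndex_lt_ascent (n : ℕ) (hn : 0 < n) (j k : ℕ)
    (hjk : j + 1 ≤ k) (hkn : j + k ≤ n - 1) :
    ∃ A : Matrix (Fin n) (Fin n) ℂ, A.pIndex = (j : ℕ∞) ∧ A.ascent = k := by
  have hjn : j < n := by omega
  have hkn' : j + k < n := by omega
  exact ⟨PfAux.Mat n j k 1, PfAux.pIndex_eq j k hjn, PfAux.ascent_eq j k hjk hkn'⟩

end
end

section
/- Let n be a positive integer and j, k nonnegative integers with j ≤ k − 2 and j + k = n. Then there exists an n-by-n complex matrix A with p(A) = j and a(A) = k. -/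
open Matrix

noncomputable section

variable {N : ℕ}

lemma euclid_apply (M : Matrix (Fin N) (Fin N) ℂ) (v : EuclideanSpace ℂ (Fin N)) (r : Fin N) :
    Matrix.toEuclideanLin M v r = M.mulVec v r := rfl

lemma ker_mem_iff (M : Matrix (Fin N) (Fin N) ℂ) (v : EuclideanSpace ℂ (Fin N)) :
    v ∈ LinearMap.ker (Matrix.toEuclideanLin M) ↔ ∀ r, M.mulVec v r = 0 := by
  constructor
  · intro h r
    have : Matrix.toEuclideanLin M v r = (0 : EuclideanSpace ℂ (Fin N)) r := by
      rw [LinearMap.mem_ker.mp h]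
    exact this
  · intro h
    rw [LinearMap.mem_ker]
    ext r
    exact h r

lemma isPartialIsometry_of_matrix (M : Matrix (Fin N) (Fin N) ℂ)
    (h : M * (Mᴴ * M) = M) : M.IsPartialIsometry := by
  intro x hx
  set z : EuclideanSpace ℂ (Fin N) := x - Matrix.toEuclideanLin (Mᴴ * M) x with hzdef
  have hz : z ∈ LinearMap.ker (Matrix.toEuclideanLin M) := by
    rw [ker_mem_iff]
    intro r
    have e1 : M.mulVec z r = (M.mulVec (fun i => x i) - M.mulVec ((Mᴴ * M).mulVec x)) r := by
      show M.mulVec ((fun i => x i) - ((Mᴴ * M).mulVec x)) r = _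
      rw [Matrix.mulVec_sub]
    have e2 : M.mulVec (fun i => x i) = M.mulVec x := rfl
    rw [e1, e2, Matrix.mulVec_mulVec, h, Pi.sub_apply, sub_self]
  have hinner : (inner ℂ z x : ℂ) = 0 := (Submodule.mem_orthogonal _ x).mp hx z hz
  have h1 : (inner ℂ (Matrix.toEuclideanLin M x) (Matrix.toEuclideanLin M x) : ℂ)
      = (inner ℂ (Matrix.toEuclideanLin (Mᴴ * M) x) x : ℂ) := by
    show dotProduct (M.mulVec x) (star (M.mulVec x))
        = dotProduct (x : Fin N → ℂ) (star ((Mᴴ * M).mulVec x))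
    rw [dotProduct_comm _ (star (M.mulVec x)), dotProduct_comm _ (star ((Mᴴ * M).mulVec x))]
    rw [Matrix.star_mulVec, Matrix.star_mulVec, ← Matrix.dotProduct_mulVec,
      Matrix.conjTranspose_mul, Matrix.conjTranspose_conjTranspose,
      ← Matrix.vecMul_vecMul, ← Matrix.dotProduct_mulVec, Matrix.dotProduct_mulVec]
  have h2 : Matrix.toEuclideanLin (Mᴴ * M) x = x - z := by rw [hzdef]; abel
  have h3 : (inner ℂ (Matrix.toEuclideanLin M x) (Matrix.toEuclideanLin M x) : ℂ) = (inner ℂ x x : ℂ) := by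
    rw [h1, h2, inner_sub_left, hinner, sub_zero]
  have h5 : ‖Matrix.toEuclideanLin M x‖ ^ 2 = ‖x‖ ^ 2 := by
    have h4 := h3
    rw [inner_self_eq_norm_sq_to_K (𝕜 := ℂ), inner_self_eq_norm_sq_to_K (𝕜 := ℂ)] at h4
    exact_mod_cast h4
  calc ‖Matrix.toEuclideanLin M x‖ = Real.sqrt (‖Matrix.toEuclideanLin M x‖ ^ 2) :=
        (Real.sqrt_sq (norm_nonneg _)).symm
    _ = Real.sqrt (‖x‖ ^ 2) := by rw [h5]
    _ = ‖x‖ := Real.sqrt_sq (norm_nonneg _)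

def cc : ℂ := ((Real.sqrt 2)⁻¹ : ℝ)

lemma cc_mul_cc : cc * cc = 1/2 := by
  unfold cc
  rw [← Complex.ofReal_mul, ← mul_inv, Real.mul_self_sqrt (by norm_num : (0:ℝ) ≤ 2)]
  norm_num

lemma star_cc : (starRingEnd ℂ) cc = cc := Complex.conj_ofReal _

lemma cc_ne_zero : cc ≠ 0 := by
  unfold cc
  simp only [ne_eq, Complex.ofReal_eq_zero, inv_eq_zero]
  positivity

lemma norm_cc : ‖cc‖ = (Real.sqrt 2)⁻¹ := by
  unfold cc
  rw [Complex.norm_real, Real.norm_eq_abs, abs_of_nonneg (by positivity)]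

lemma norm_cc_ne_one : ‖cc‖ ≠ 1 := by
  rw [norm_cc]
  intro h
  have h2 : Real.sqrt 2 = 1 := by
    field_simp at h
    linarith [h]
  have := Real.sq_sqrt (by norm_num : (0:ℝ) ≤ 2)
  rw [h2] at this
  norm_num at this

def posN (j k i t : ℕ) : ℕ :=
  if t < k then t + i else if t + i < k + j then t + i else i + (t - k) + 1

def wN (j k i t : ℕ) : ℂ :=
  if t < k then (if t + i < k then (if j < t + i ∧ t ≤ j then cc else 1) else 0)
  else (if t + i < k + j then 1 else if i + (t - k) + 1 < k then cc else 0)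

def PM (j k : ℕ) (i : ℕ) : Matrix (Fin (j+k)) (Fin (j+k)) ℂ :=
  Matrix.of fun r t => if (r:ℕ) = posN j k i (t:ℕ) then wN j k i (t:ℕ) else 0

lemma sum_ite_coe {n : ℕ} (m : ℕ) (f : Fin n → ℂ) :
    (∑ q : Fin n, if (q : ℕ) = m then f q else 0) = if h : m < n then f ⟨m, h⟩ else 0 := by
  split
  · rename_i h
    rw [Finset.sum_eq_single (⟨m, h⟩ : Fin n)]
    · simp
    · intro b _ hb
      rw [if_neg]
      intro hbm
      exact hb (Fin.ext hbm)
    · intro habs; exact absurd (Finset.mem_univ _) habs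
  · rename_i h
    apply Finset.sum_eq_zero
    intro b _
    rw [if_neg]
    intro hbm
    exact h (hbm ▸ b.isLt)

lemma PM_zero (j k : ℕ) : PM j k 0 = 1 := by
  ext r t
  have ht := t.isLt
  simp only [PM, Matrix.of_apply, posN, wN, Matrix.one_apply]
  split_ifs <;> first | rfl | omega | (exfalso; omega) | (simp_all [Fin.ext_iff]; omega)

lemma PM_succ (j k i : ℕ) : PM j k 1 * PM j k i = PM j k (i + 1) := by
  ext r t
  rw [Matrix.mul_apply]
  have ht := t.isLt
  have hr := r.isLt
  simp only [PM, Matrix.of_apply, mul_ite, mul_zero]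
  rw [sum_ite_coe]
  simp only [posN, wN]
  split_ifs <;> first | rfl | omega | (exfalso; omega) | ring

lemma star_cc_mul_cc : (starRingEnd ℂ) cc * cc = 1/2 := by rw [star_cc, cc_mul_cc]

lemma wN_dead (j k i t : ℕ) (h : j + k ≤ posN j k i t) : wN j k i t = 0 := by
  unfold posN at h
  unfold wN
  split_ifs at h ⊢ <;> first | rfl | omega | (exfalso; omega)

lemma gram_entry (j k i : ℕ) :
    (PM j k i)ᴴ * PM j k i = Matrix.of fun q t : Fin (j + k) =>
      if posN j k i (q:ℕ) = posN j k i (t:ℕ) then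
        (starRingEnd ℂ) (wN j k i (q:ℕ)) * wN j k i (t:ℕ) else 0 := by
  ext q t
  rw [Matrix.mul_apply]
  have hs : ∀ (c : Prop) [Decidable c] (a : ℂ),
      star (if c then a else 0) = if c then (starRingEnd ℂ) a else 0 := by
    intros c _ a; split <;> simp [Complex.star_def]
  simp only [PM, Matrix.conjTranspose_apply, Matrix.of_apply, hs, mul_ite,
    mul_zero, ite_mul, zero_mul]
  rw [sum_ite_coe]
  have hq := q.isLt
  have ht := t.isLt
  by_cases hpt : posN j k i (t:ℕ) < j + k
  · rw [dif_pos hpt]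
    simp only [Fin.val_mk]
    split_ifs <;> first | rfl | omega | ring1
  · rw [dif_neg hpt, wN_dead j k i (t:ℕ) (by omega)]
    split_ifs <;> ring

lemma class_sum (j k i : ℕ) (hjk : j + 2 ≤ k) (hij : i ≤ j) (t : Fin (j + k))
    (hw : wN j k i (t:ℕ) ≠ 0) :
    (∑ q : Fin (j+k), if posN j k i (q:ℕ) = posN j k i (t:ℕ) then
      (starRingEnd ℂ) (wN j k i (q:ℕ)) * wN j k i (q:ℕ) else 0) = 1 := by
  have ht := t.isLt
  by_cases hy : (t:ℕ) < k
  · have hlive : (t:ℕ) + i < k := by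
      by_contra hc
      exact hw (by unfold wN; split_ifs <;> first | rfl | omega)
    by_cases hcr : j < (t:ℕ) + i ∧ (t:ℕ) ≤ j
    · -- pair {t, k+t-1}
      have ht1 : 1 ≤ (t:ℕ) := by omega
      have : ∀ q : Fin (j+k), (if posN j k i (q:ℕ) = posN j k i (t:ℕ) then
          (starRingEnd ℂ) (wN j k i (q:ℕ)) * wN j k i (q:ℕ) else 0)
          = (if (q:ℕ) = (t:ℕ) then (1/2 : ℂ) else 0)
            + (if (q:ℕ) = k + (t:ℕ) - 1 then (1/2 : ℂ) else 0) := by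
        intro q
        have hq := q.isLt
        simp only [posN, wN]
        split_ifs <;> first | omega | (rw [star_cc_mul_cc]; ring) | simp
      rw [Finset.sum_congr rfl (fun q _ => this q), Finset.sum_add_distrib,
        sum_ite_coe, sum_ite_coe]
      rw [dif_pos (by omega : (t:ℕ) < j + k), dif_pos (by omega : k + (t:ℕ) - 1 < j + k)]
      norm_num
    · -- singleton
      have : ∀ q : Fin (j+k), (if posN j k i (q:ℕ) = posN j k i (t:ℕ) then
          (starRingEnd ℂ) (wN j k i (q:ℕ)) * wN j k i (q:ℕ) else 0)
          = (if (q:ℕ) = (t:ℕ) then (1:ℂ) else 0) := by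
        intro q
        have hq := q.isLt
        simp only [posN, wN]
        split_ifs <;> first | omega | simp | (rw [star_cc_mul_cc]; ring)
      rw [Finset.sum_congr rfl (fun q _ => this q), sum_ite_coe, dif_pos (by omega : (t:ℕ) < j + k)]
  · by_cases hch : (t:ℕ) + i < k + j
    · -- x chain singleton
      have : ∀ q : Fin (j+k), (if posN j k i (q:ℕ) = posN j k i (t:ℕ) then
          (starRingEnd ℂ) (wN j k i (q:ℕ)) * wN j k i (q:ℕ) else 0)
          = (if (q:ℕ) = (t:ℕ) then (1:ℂ) else 0) := by
        intro q
        have hq := q.isLt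
        simp only [posN, wN]
        split_ifs <;> first | omega | simp | (rw [star_cc_mul_cc]; ring)
      rw [Finset.sum_congr rfl (fun q _ => this q), sum_ite_coe, dif_pos (by omega : (t:ℕ) < j + k)]
    · -- x crossed : pair {t, t-k+1}
      have hlive : i + ((t:ℕ) - k) + 1 < k := by
        by_contra hc
        exact hw (by unfold wN; split_ifs <;> first | rfl | omega)
      have : ∀ q : Fin (j+k), (if posN j k i (q:ℕ) = posN j k i (t:ℕ) then
          (starRingEnd ℂ) (wN j k i (q:ℕ)) * wN j k i (q:ℕ) else 0)
          = (if (q:ℕ) = (t:ℕ) then (1/2 : ℂ) else 0)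
            + (if (q:ℕ) = (t:ℕ) - k + 1 then (1/2 : ℂ) else 0) := by
        intro q
        have hq := q.isLt
        simp only [posN, wN]
        split_ifs <;> first | omega | (rw [star_cc_mul_cc]; ring) | simp
      rw [Finset.sum_congr rfl (fun q _ => this q), Finset.sum_add_distrib,
        sum_ite_coe, sum_ite_coe]
      rw [dif_pos (by omega : (t:ℕ) < j + k), dif_pos (by omega : (t:ℕ) - k + 1 < j + k)]
      norm_num

lemma PM_pi_eq (j k i : ℕ) (hjk : j + 2 ≤ k) (hij : i ≤ j) :
    PM j k i * ((PM j k i)ᴴ * PM j k i) = PM j k i := by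
  rw [gram_entry]
  ext r t
  rw [Matrix.mul_apply]
  simp only [PM, Matrix.of_apply]
  by_cases hrt : (r:ℕ) = posN j k i (t:ℕ)
  · rw [if_pos hrt]
    have hpt : ∀ q : Fin (j+k),
        (if (r:ℕ) = posN j k i (q:ℕ) then wN j k i (q:ℕ) else 0) *
          (if posN j k i (q:ℕ) = posN j k i (t:ℕ) then
            (starRingEnd ℂ) (wN j k i (q:ℕ)) * wN j k i (t:ℕ) else 0)
        = (if posN j k i (q:ℕ) = posN j k i (t:ℕ) then
            (starRingEnd ℂ) (wN j k i (q:ℕ)) * wN j k i (q:ℕ) else 0) * wN j k i (t:ℕ) := by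
      intro q
      by_cases hq1 : posN j k i (q:ℕ) = posN j k i (t:ℕ)
      · rw [if_pos hq1, if_pos hq1, if_pos (by omega : (r:ℕ) = posN j k i (q:ℕ))]
        ring
      · rw [if_neg hq1, if_neg hq1, mul_zero, zero_mul]
    rw [Finset.sum_congr rfl (fun q _ => hpt q), ← Finset.sum_mul]
    by_cases hwt : wN j k i (t:ℕ) = 0
    · rw [hwt, mul_zero]
    · rw [class_sum j k i hjk hij t hwt, one_mul]
  · rw [if_neg hrt]
    apply Finset.sum_eq_zero
    intro q _
    split_ifs <;> first | rfl | (exfalso; omega) | ring1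

lemma ker_mem_iff' {N : ℕ} (M : Matrix (Fin N) (Fin N) ℂ) (v : EuclideanSpace ℂ (Fin N)) :
    v ∈ LinearMap.ker (Matrix.toEuclideanLin M) ↔ ∀ r, M.mulVec v r = 0 := by
  constructor
  · intro h r
    have : Matrix.toEuclideanLin M v r = (0 : EuclideanSpace ℂ (Fin N)) r := by
      rw [LinearMap.mem_ker.mp h]
    exact this
  · intro h
    rw [LinearMap.mem_ker]
    ext r
    exact h r

lemma PM_pow (j k : ℕ) : ∀ i, PM j k 1 ^ i = PM j k i := by
  intro i
  induction i with
  | zero => rw [pow_zero, PM_zero]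
  | succ m ih => rw [pow_succ', ih, PM_succ]

lemma PM_dead (j k i : ℕ) (hjk : j + 2 ≤ k) (h : k ≤ i) : PM j k i = 0 := by
  ext r t
  have ht := t.isLt
  simp only [PM, Matrix.of_apply, wN, Matrix.zero_apply]
  split_ifs <;> first | rfl | omega | (exfalso; omega)

lemma mulVec_esingle {N : ℕ} (M : Matrix (Fin N) (Fin N) ℂ) (t0 : Fin N) :
    M.mulVec (EuclideanSpace.single t0 (1:ℂ)) = fun r => M r t0 := by
  funext r
  show (∑ q, M r q * (EuclideanSpace.single t0 (1:ℂ)) q) = M r t0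
  have : ∀ q, M r q * (EuclideanSpace.single t0 (1:ℂ)) q
      = if q = t0 then M r q else 0 := by
    intro q
    rw [EuclideanSpace.single_apply]
    split_ifs <;> simp
  rw [Finset.sum_congr rfl (fun q _ => this q), Finset.sum_ite_eq']
  simp

lemma not_pi (j k : ℕ) (hjk : j + 2 ≤ k) : ¬ (PM j k (j+1)).IsPartialIsometry := by
  intro h
  have hn : 0 < j + k := by omega
  set t0 : Fin (j+k) := ⟨0, hn⟩ with ht0
  set e0 : EuclideanSpace ℂ (Fin (j+k)) := EuclideanSpace.single t0 1 with he0
  have hmem : e0 ∈ (LinearMap.ker (Matrix.toEuclideanLin (PM j k (j+1))))ᗮ := by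
    rw [Submodule.mem_orthogonal]
    intro u hu
    rw [ker_mem_iff'] at hu
    have h1 := hu ⟨j+1, by omega⟩
    have h2 : (PM j k (j+1)).mulVec u ⟨j+1, by omega⟩ = cc * u t0 := by
      show (∑ q, PM j k (j+1) ⟨j+1, by omega⟩ q * u q) = cc * u t0
      have : ∀ q : Fin (j+k), PM j k (j+1) ⟨j+1, by omega⟩ q * u q
          = if (q:ℕ) = 0 then cc * u q else 0 := by
        intro q
        have hq := q.isLt
        simp only [PM, Matrix.of_apply, posN, wN, Fin.val_mk]
        split_ifs <;> first | ring1 | omega | (exfalso; omega)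
      rw [Finset.sum_congr rfl (fun q _ => this q), sum_ite_coe]
      rw [dif_pos hn]
    have h3 : u t0 = 0 := by
      rw [h2] at h1
      rcases mul_eq_zero.mp h1 with hc | hu0
      · exact absurd hc cc_ne_zero
      · exact hu0
    show (inner ℂ u e0 : ℂ) = 0
    rw [he0, EuclideanSpace.inner_single_right, h3]
    simp
  have hval := h e0 hmem
  have hne : Matrix.toEuclideanLin (PM j k (j+1)) e0
      = EuclideanSpace.single (⟨j+1, by omega⟩ : Fin (j+k)) cc := by
    ext r
    show (PM j k (j+1)).mulVec e0 r = _
    rw [he0, mulVec_esingle]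
    rw [EuclideanSpace.single_apply]
    have hr := r.isLt
    have h00 : ((⟨0, hn⟩ : Fin (j+k)) : ℕ) = 0 := rfl
    have ht00 : (t0 : ℕ) = 0 := rfl
    simp only [PM, Matrix.of_apply, posN, wN, Fin.ext_iff, Fin.val_mk]
    split_ifs <;> first | rfl | omega | (exfalso; omega)
  rw [hne, EuclideanSpace.norm_single, he0, EuclideanSpace.norm_single] at hval
  rw [norm_one] at hval
  exact norm_cc_ne_one hval

lemma ker_ne (j k m : ℕ) (hjk : j + 2 ≤ k) (hm : m < k) :
    LinearMap.ker (Matrix.toEuclideanLin (PM j k m)) ≠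
      LinearMap.ker (Matrix.toEuclideanLin (PM j k (m+1))) := by
  have hn : k - 1 - m < j + k := by omega
  set u : EuclideanSpace ℂ (Fin (j+k)) := EuclideanSpace.single ⟨k-1-m, hn⟩ 1 with hu
  intro heq
  have h1 : u ∈ LinearMap.ker (Matrix.toEuclideanLin (PM j k (m+1))) := by
    rw [ker_mem_iff']
    intro r
    rw [hu, mulVec_esingle]
    have hr := r.isLt
    simp only [PM, Matrix.of_apply, posN, wN, Fin.val_mk]
    split_ifs <;> first | rfl | omega | (exfalso; omega)
  have h2 : u ∉ LinearMap.ker (Matrix.toEuclideanLin (PM j k m)) := by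
    rw [ker_mem_iff']
    intro hcon
    have h3 := hcon ⟨k-1, by omega⟩
    rw [hu, mulVec_esingle] at h3
    revert h3
    simp only [PM, Matrix.of_apply, posN, wN, Fin.val_mk]
    split_ifs <;> first | exact fun hh => absurd hh cc_ne_zero | exact fun hh => absurd hh one_ne_zero | omega | (intro; omega)
  exact h2 (heq ▸ h1)

/-- If `j ≤ k - 2` and `j + k = n` then there is an `n`-by-`n` complex matrix `A` with
`p(A) = j` and `a(A) = k`. -/
theorem exists_matrix_pIndex_add_ascent_eq (n : ℕ) (hn : 0 < n) (j k : ℕ)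
    (hjk : j + 2 ≤ k) (hkn : j + k = n) :
    ∃ A : Matrix (Fin n) (Fin n) ℂ, A.pIndex = (j : ℕ∞) ∧ A.ascent = k := by
  subst hkn
  refine ⟨PM j k 1, ?_, ?_⟩
  · unfold Matrix.pIndex
    have hset : {m : ℕ | ∀ i ≤ m, ((PM j k 1) ^ i).IsPartialIsometry} = Set.Iic j := by
      ext m
      simp only [Set.mem_setOf_eq, Set.mem_Iic]
      constructor
      · intro hm
        by_contra hc
        push_neg at hc
        have hpi := hm (j + 1) (by omega)
        rw [PM_pow] at hpi
        exact not_pi j k hjk hpi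
      · intro hm i hi
        rw [PM_pow]
        exact isPartialIsometry_of_matrix _ (PM_pi_eq j k i hjk (le_trans hi hm))
    rw [hset]
    apply le_antisymm
    · apply sSup_le
      rintro x ⟨m, hm, rfl⟩
      exact_mod_cast Set.mem_Iic.mp hm
    · exact le_sSup ⟨j, Set.mem_Iic.mpr le_rfl, rfl⟩
  · unfold Matrix.ascent
    have hk_mem : k ∈ {m : ℕ | LinearMap.ker (Matrix.toEuclideanLin ((PM j k 1) ^ m)) =
        LinearMap.ker (Matrix.toEuclideanLin ((PM j k 1) ^ (m + 1)))} := by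
      show LinearMap.ker _ = LinearMap.ker _
      rw [PM_pow, PM_pow, PM_dead j k k hjk le_rfl, PM_dead j k (k+1) hjk (by omega)]
    apply le_antisymm
    · exact Nat.sInf_le hk_mem
    · apply le_csInf ⟨k, hk_mem⟩
      intro m hm
      by_contra hc
      push_neg at hc
      apply ker_ne j k m hjk (by omega)
      have hm' : LinearMap.ker (Matrix.toEuclideanLin ((PM j k 1) ^ m)) =
          LinearMap.ker (Matrix.toEuclideanLin ((PM j k 1) ^ (m + 1))) := hm
      rw [PM_pow, PM_pow] at hm'
      exact hm' 

end
end

section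
/- Let A be an n-by-n complex matrix which is unitarily similar to the upper-triangular block matrix A′ with blocks A₁, …, A_{j−1} on the superdiagonal positions, then B and C, acting on ℂⁿ = ℂ^{n₁} ⊕ ⋯ ⊕ ℂ^{n_j} ⊕ ℂ^m (A′ has zero diagonal blocks in the first j positions, A_ℓ is the (ℓ, ℓ+1) block for 1 ≤ ℓ ≤ j−1, B is the (j, j+1) block, C is the (j+1, j+1) block, and all other blocks are zero), where A_ℓ*A_ℓ = I_{n_{ℓ+1}} for 1 ≤ ℓ ≤ j − 1 and B*B + C*C = I_m, and where 1 ≤ j ≤ a(A). Then p(A) = j + p(C). -/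
open Matrix

noncomputable section

set_option linter.unusedSectionVars false

section Aux

local notation "⟪" x ", " y "⟫" => @inner ℂ _ _ x y

lemma aux_pi_iff {E : Type*} [NormedAddCommGroup E] [InnerProductSpace ℂ E]
    [FiniteDimensional ℂ E] (f : E →ₗ[ℂ] E) :
    (∀ x ∈ (LinearMap.ker f)ᗮ, ‖f x‖ = ‖x‖) ↔
      (LinearMap.adjoint f ∘ₗ f) ∘ₗ (LinearMap.adjoint f ∘ₗ f) = LinearMap.adjoint f ∘ₗ f := by
  set K := LinearMap.ker f with hK
  set g := LinearMap.adjoint f ∘ₗ f with hgdef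
  have hg : ∀ x y : E, ⟪g x, y⟫ = ⟪f x, f y⟫ := by
    intro x y; simp [hgdef, LinearMap.adjoint_inner_left]
  constructor
  · intro h
    set φ : Kᗮ →ₗᵢ[ℂ] E := ⟨f ∘ₗ Kᗮ.subtype, fun v => h v.1 v.2⟩ with hφ
    have hφ' : ∀ v w : Kᗮ, ⟪f v.1, f w.1⟫ = ⟪v.1, w.1⟫ := by
      intro v w
      have := φ.inner_map_map v w
      exact this
    have claim : ∀ x₀ ∈ K, ∀ x₁ ∈ Kᗮ, g (x₀ + x₁) = x₁ := by
      intro x₀ hx₀ x₁ hx₁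
      apply ext_inner_right ℂ
      intro y
      obtain ⟨y₀, hy₀, y₁, hy₁, rfl⟩ := K.exists_add_mem_mem_orthogonal y
      have hfx₀ : f x₀ = 0 := hx₀
      have hfy₀ : f y₀ = 0 := hy₀
      rw [hg]
      simp only [map_add, hfx₀, hfy₀, zero_add, add_zero]
      rw [hφ' ⟨x₁, hx₁⟩ ⟨y₁, hy₁⟩]
      rw [inner_add_right]
      have : ⟪x₁, y₀⟫ = 0 := (Submodule.mem_orthogonal' K x₁).mp hx₁ y₀ hy₀
      rw [this, zero_add]
    ext x
    obtain ⟨x₀, hx₀, x₁, hx₁, rfl⟩ := K.exists_add_mem_mem_orthogonal x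
    have h1 : g (x₀ + x₁) = x₁ := claim x₀ hx₀ x₁ hx₁
    have h2 : g x₁ = x₁ := by
      have := claim 0 (zero_mem K) x₁ hx₁
      simpa using this
    simp [LinearMap.comp_apply, h1, h2]
  · intro h x hx
    have hker : ∀ v, g v = 0 → f v = 0 := by
      intro v hv
      have : ⟪f v, f v⟫ = 0 := by rw [← hg]; simp [hv]
      exact inner_self_eq_zero.mp this
    have h1 : g (g x - x) = 0 := by
      have := congrArg (fun m => m x) h
      simp only [LinearMap.comp_apply] at this
      simp [map_sub, this]
    have h2 : f (g x - x) = 0 := hker _ h1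
    have h3 : ⟪g x - x, x⟫ = 0 := hx (g x - x) h2
    have h4 : ⟪g x, x⟫ = ⟪x, x⟫ := by
      have := inner_sub_left (𝕜 := ℂ) (g x) x x
      rw [h3] at this
      linear_combination -this
    have h5 : ‖f x‖ ^ 2 = ‖x‖ ^ 2 := by
      have := hg x x
      rw [h4] at this
      calc ‖f x‖ ^ 2 = RCLike.re ⟪f x, f x⟫ := norm_sq_eq_re_inner (𝕜 := ℂ) _
        _ = RCLike.re ⟪x, x⟫ := by rw [← this]
        _ = ‖x‖ ^ 2 := (norm_sq_eq_re_inner (𝕜 := ℂ) _).symm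
    calc ‖f x‖ = Real.sqrt (‖f x‖ ^ 2) := (Real.sqrt_sq (norm_nonneg _)).symm
      _ = Real.sqrt (‖x‖ ^ 2) := by rw [h5]
      _ = ‖x‖ := Real.sqrt_sq (norm_nonneg _)

lemma toEuclideanLin_mul_s5 {ι : Type*} [Fintype ι] [DecidableEq ι] (M N : Matrix ι ι ℂ) :
    Matrix.toEuclideanLin (M * N) =
      (Matrix.toEuclideanLin M).comp (Matrix.toEuclideanLin N) := by
  ext x
  simp [Matrix.toEuclideanLin_apply, Matrix.mulVec_mulVec]

lemma Matrix.isPartialIsometry_iff {ι : Type*} [Fintype ι] [DecidableEq ι]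
    (A : Matrix ι ι ℂ) :
    A.IsPartialIsometry ↔ (Aᴴ * A) * (Aᴴ * A) = Aᴴ * A := by
  rw [Matrix.IsPartialIsometry, aux_pi_iff]
  rw [← Matrix.toEuclideanLin_conjTranspose_eq_adjoint, ← toEuclideanLin_mul_s5,
    ← toEuclideanLin_mul_s5]
  exact ⟨fun h => Matrix.toEuclideanLin.injective h, fun h => congrArg _ h⟩

section conj
variable {ι κ : Type*} [Fintype ι] [Fintype κ] [DecidableEq ι] [DecidableEq κ]
  (U : Matrix ι κ ℂ)

lemma sandwich (hU2 : U * Uᴴ = 1) (X Y : Matrix ι ι ℂ) :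
    (Uᴴ * X * U) * (Uᴴ * Y * U) = Uᴴ * (X * Y) * U := by
  calc (Uᴴ * X * U) * (Uᴴ * Y * U) = Uᴴ * X * (U * Uᴴ) * Y * U := by
        simp only [Matrix.mul_assoc]
    _ = Uᴴ * (X * Y) * U := by rw [hU2]; simp only [Matrix.mul_one, Matrix.mul_assoc]

lemma conj_eq_iff (hU2 : U * Uᴴ = 1) (X Y : Matrix ι ι ℂ) :
    Uᴴ * X * U = Uᴴ * Y * U ↔ X = Y := by
  constructor
  · intro h
    have key : ∀ Z : Matrix ι ι ℂ, U * (Uᴴ * Z * U) * Uᴴ = Z := by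
      intro Z
      calc U * (Uᴴ * Z * U) * Uᴴ = (U * Uᴴ) * Z * (U * Uᴴ) := by
            simp only [Matrix.mul_assoc]
        _ = Z := by rw [hU2, Matrix.one_mul, Matrix.mul_one]
    have h2 := congrArg (fun M => U * M * Uᴴ) h
    simpa only [key] using h2
  · intro h; rw [h]

lemma conjT_sandwich (X : Matrix ι ι ℂ) : (Uᴴ * X * U)ᴴ = Uᴴ * Xᴴ * U := by
  simp only [Matrix.conjTranspose_mul, Matrix.conjTranspose_conjTranspose,
    Matrix.mul_assoc]

end conj

lemma Matrix.pIndex_unitary {ι κ : Type*} [Fintype ι] [Fintype κ] [DecidableEq ι]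
    [DecidableEq κ] (A : Matrix ι ι ℂ) (A' : Matrix κ κ ℂ)
    (U : Matrix ι κ ℂ) (hU1 : Uᴴ * U = 1) (hU2 : U * Uᴴ = 1) (hA' : A' = Uᴴ * A * U) :
    A.pIndex = A'.pIndex := by
  have hpow : ∀ i : ℕ, A' ^ i = Uᴴ * A ^ i * U := by
    intro i
    induction i with
    | zero => simp [pow_zero, Matrix.mul_one, hU1]
    | succ i ih => rw [pow_succ, ih, hA', sandwich U hU2, ← pow_succ]
  have hPI : ∀ i : ℕ, (A ^ i).IsPartialIsometry ↔ (A' ^ i).IsPartialIsometry := by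
    intro i
    rw [Matrix.isPartialIsometry_iff, Matrix.isPartialIsometry_iff, hpow,
      conjT_sandwich U, sandwich U hU2, sandwich U hU2, conj_eq_iff U hU2]
  unfold Matrix.pIndex
  congr 1
  ext jj
  simp only [Set.mem_image, Set.mem_setOf_eq]
  constructor
  · rintro ⟨a, ha, rfl⟩; exact ⟨a, fun i hi => (hPI i).mp (ha i hi), rfl⟩
  · rintro ⟨a, ha, rfl⟩; exact ⟨a, fun i hi => (hPI i).mpr (ha i hi), rfl⟩

lemma sup_coe_Iic (n : ℕ) : sSup ((↑) '' Set.Iic n : Set ℕ∞) = (n : ℕ∞) := by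
  apply le_antisymm
  · apply sSup_le
    rintro a ⟨k, hk, rfl⟩
    exact_mod_cast hk
  · exact le_sSup ⟨n, le_refl n, rfl⟩

lemma sup_coe_univ : sSup ((↑) '' (Set.univ : Set ℕ) : Set ℕ∞) = ⊤ := by
  rw [sSup_eq_top]
  intro b hb
  lift b to ℕ using hb.ne
  exact ⟨(b + 1 : ℕ), ⟨b + 1, trivial, rfl⟩, by exact_mod_cast Nat.lt_succ_self b⟩

lemma sup_shift (j : ℕ) (S : Set ℕ) (h0 : 0 ∈ S)
    (hdc : ∀ a b : ℕ, a ≤ b → b ∈ S → a ∈ S) :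
    sSup ((↑) '' {i : ℕ | i - j ∈ S} : Set ℕ∞) = (j : ℕ∞) + sSup ((↑) '' S : Set ℕ∞) := by
  by_cases htop : ∀ k, k ∈ S
  · have h1 : S = Set.univ := Set.eq_univ_of_forall htop
    have h2 : {i : ℕ | i - j ∈ S} = Set.univ := Set.eq_univ_of_forall fun i => htop _
    rw [h2, h1, sup_coe_univ, add_top]
  · push_neg at htop
    obtain ⟨K, hK⟩ := htop
    have hbdd : BddAbove S := ⟨K, fun k hk => by
      by_contra hlt
      exact hK (hdc K k (le_of_not_ge hlt) hk)⟩
    set K₀ := sSup S with hK₀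
    have hmem : K₀ ∈ S := Nat.sSup_mem ⟨0, h0⟩ hbdd
    have hS : S = Set.Iic K₀ := by
      ext k
      exact ⟨fun hk => le_csSup hbdd hk, fun hk => hdc k K₀ hk hmem⟩
    have hT : {i : ℕ | i - j ∈ S} = Set.Iic (j + K₀) := by
      ext i
      simp only [Set.mem_setOf_eq, hS, Set.mem_Iic]
      omega
    rw [hT, hS, sup_coe_Iic, sup_coe_Iic]
    exact_mod_cast rfl

lemma block_key (j m : ℕ) (hj : 0 < j) (ns : Fin j → ℕ)
    (A' : Matrix ((Σ ℓ : Fin j, Fin (ns ℓ)) ⊕ Fin m) ((Σ ℓ : Fin j, Fin (ns ℓ)) ⊕ Fin m) ℂ)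
    (As : ∀ (ℓ : Fin j) (h : (ℓ : ℕ) + 1 < j),
      Matrix (Fin (ns ℓ)) (Fin (ns ⟨(ℓ : ℕ) + 1, h⟩)) ℂ)
    (B : Matrix (Fin (ns ⟨j - 1, Nat.sub_lt hj Nat.one_pos⟩)) (Fin m) ℂ)
    (C : Matrix (Fin m) (Fin m) ℂ)
    (hAs : ∀ (ℓ : Fin j) (h : (ℓ : ℕ) + 1 < j), (As ℓ h)ᴴ * As ℓ h = 1)
    (hBC : Bᴴ * B + Cᴴ * C = 1)
    (hblk₁ : ∀ (ℓ : Fin j) (h : (ℓ : ℕ) + 1 < j) (a : Fin (ns ℓ))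
      (b : Fin (ns ⟨(ℓ : ℕ) + 1, h⟩)),
      A' (Sum.inl ⟨ℓ, a⟩) (Sum.inl ⟨⟨(ℓ : ℕ) + 1, h⟩, b⟩) = As ℓ h a b)
    (hblk₂ : ∀ (ℓ ℓ' : Fin j) (a : Fin (ns ℓ)) (b : Fin (ns ℓ')), (ℓ' : ℕ) ≠ (ℓ : ℕ) + 1 →
      A' (Sum.inl ⟨ℓ, a⟩) (Sum.inl ⟨ℓ', b⟩) = 0)
    (hblk₃ : ∀ (a : Fin (ns ⟨j - 1, Nat.sub_lt hj Nat.one_pos⟩)) (b : Fin m),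
      A' (Sum.inl ⟨⟨j - 1, Nat.sub_lt hj Nat.one_pos⟩, a⟩) (Sum.inr b) = B a b)
    (hblk₄ : ∀ (ℓ : Fin j), (ℓ : ℕ) ≠ j - 1 → ∀ (a : Fin (ns ℓ)) (b : Fin m),
      A' (Sum.inl ⟨ℓ, a⟩) (Sum.inr b) = 0)
    (hblk₅ : ∀ a b : Fin m, A' (Sum.inr a) (Sum.inr b) = C a b)
    (hblk₆ : ∀ (a : Fin m) (ℓ : Fin j) (b : Fin (ns ℓ)), A' (Sum.inr a) (Sum.inl ⟨ℓ, b⟩) = 0) :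
    ∀ i : ℕ, (A' ^ i)ᴴ * A' ^ i =
      Matrix.fromBlocks
        (Matrix.diagonal (fun p : Σ ℓ : Fin j, Fin (ns ℓ) =>
          if i ≤ (p.1 : ℕ) then (1 : ℂ) else 0)) 0 0
        ((C ^ (i - j))ᴴ * C ^ (i - j)) := by
  classical
  set P : Matrix (Σ ℓ : Fin j, Fin (ns ℓ)) (Σ ℓ : Fin j, Fin (ns ℓ)) ℂ := Matrix.of (fun p q => A' (Sum.inl p) (Sum.inl q)) with hP
  set Q : Matrix (Σ ℓ : Fin j, Fin (ns ℓ)) (Fin m) ℂ := Matrix.of (fun p b => A' (Sum.inl p) (Sum.inr b)) with hQ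
  have hPapp : ∀ p q, P p q = A' (Sum.inl p) (Sum.inl q) := fun _ _ => rfl
  have hQapp : ∀ p b, Q p b = A' (Sum.inl p) (Sum.inr b) := fun _ _ => rfl
  have hA'blk : A' = Matrix.fromBlocks P Q 0 C := by
    ext p q
    cases p with
    | inl p =>
        cases q with
        | inl q => rfl
        | inr b => rfl
    | inr a =>
        cases q with
        | inl q =>
            obtain ⟨ℓ, b⟩ := q
            simpa [Matrix.fromBlocks] using hblk₆ a ℓ b
        | inr b => simpa [Matrix.fromBlocks] using hblk₅ a b
  -- the four block identities
  intro i0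
  induction i0 with
  | zero =>
      simp only [pow_zero, Matrix.conjTranspose_one, Matrix.one_mul, Nat.zero_sub,
        Matrix.mul_one]
      have : (Matrix.diagonal (fun p : Σ ℓ : Fin j, Fin (ns ℓ) => if 0 ≤ (p.1 : ℕ) then (1 : ℂ) else 0)) = 1 := by
        have : (fun p : Σ ℓ : Fin j, Fin (ns ℓ) => if 0 ≤ (p.1 : ℕ) then (1 : ℂ) else 0) = fun _ => 1 := by
          funext p; simp
        rw [this, Matrix.diagonal_one]
      rw [this, Matrix.fromBlocks_one]
    | succ i ih =>
      -- four block identities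
      have g1 : Pᴴ * (Matrix.diagonal (fun p : Σ ℓ : Fin j, Fin (ns ℓ) =>
          if i ≤ (p.1 : ℕ) then (1 : ℂ) else 0) * P) =
          Matrix.diagonal (fun p : Σ ℓ : Fin j, Fin (ns ℓ) =>
          if i + 1 ≤ (p.1 : ℕ) then (1 : ℂ) else 0) := by
        ext p q
        rw [Matrix.mul_apply]
        simp only [Matrix.conjTranspose_apply, Matrix.diagonal_mul]
        obtain ⟨l, a⟩ := p
        obtain ⟨l', b⟩ := q
        rcases hl : (l : ℕ) with _ | t
        · refine (Finset.sum_eq_zero ?_).trans ?_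
          · rintro ⟨ℓs, c⟩ -
            rw [hPapp, hblk₂ ℓs l c a (by omega), star_zero, zero_mul]
          · rw [Matrix.diagonal_apply]
            have hfst : (((⟨l, a⟩ : Σ ℓ : Fin j, Fin (ns ℓ)).fst : Fin j) : ℕ) = 0 := hl
            by_cases hpq : (⟨l, a⟩ : Σ ℓ : Fin j, Fin (ns ℓ)) = ⟨l', b⟩
            · rw [if_pos hpq]
              exact (if_neg (by omega)).symm
            · rw [if_neg hpq]
        · have hlt : t + 1 < j := hl ▸ l.isLt
          have hlval : l = ⟨t + 1, hlt⟩ := Fin.ext hl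
          subst hlval
          by_cases hc : l' = (⟨t + 1, hlt⟩ : Fin j)
          · subst hc
            rw [← Finset.univ_sigma_univ, Finset.sum_sigma]
            have htj : t < j := by omega
            refine (Finset.sum_eq_single_of_mem (⟨t, htj⟩ : Fin j)
              (Finset.mem_univ _) ?_).trans ?_
            · rintro ℓs - hne
              apply Finset.sum_eq_zero
              intro c _
              rw [hPapp, hblk₂ ℓs ⟨t + 1, hlt⟩ c a ?_, star_zero, zero_mul]
              have : (ℓs : ℕ) ≠ t := fun h => hne (Fin.ext h)
              show t + 1 ≠ (ℓs : ℕ) + 1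
              omega
            · have hAe : ∀ x : Fin (ns ⟨t + 1, hlt⟩), ∀ c : Fin (ns ⟨t, htj⟩),
                  P ⟨⟨t, htj⟩, c⟩ ⟨⟨t + 1, hlt⟩, x⟩ = As ⟨t, htj⟩ hlt c x := by
                intro x c
                rw [hPapp]
                exact hblk₁ ⟨t, htj⟩ hlt c x
              simp only [hAe]
              have hAsab := congrFun (congrFun (hAs ⟨t, htj⟩ hlt) a) b
              rw [Matrix.mul_apply] at hAsab
              simp only [Matrix.conjTranspose_apply] at hAsab
              by_cases hit : i ≤ t
              · have hone : (if i ≤ ((⟨t, htj⟩ : Fin j) : ℕ) then (1 : ℂ) else 0) = 1 :=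
                  if_pos hit
                simp only [hone, one_mul]
                rw [hAsab, Matrix.one_apply, Matrix.diagonal_apply]
                by_cases hab : a = b
                · rw [if_pos hab, if_pos (by rw [hab])]
                  exact (if_pos (by omega : i + 1 ≤ t + 1)).symm
                · rw [if_neg hab, if_neg (fun hh => hab (by simpa using hh))]
              · have hzero : (if i ≤ ((⟨t, htj⟩ : Fin j) : ℕ) then (1 : ℂ) else 0) = 0 :=
                  if_neg hit
                simp only [hzero, zero_mul, mul_zero, Finset.sum_const_zero]
                rw [Matrix.diagonal_apply]
                by_cases hpq : (⟨⟨t + 1, hlt⟩, a⟩ : Σ ℓ : Fin j, Fin (ns ℓ)) = ⟨⟨t + 1, hlt⟩, b⟩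
                · rw [if_pos hpq]
                  exact (if_neg (by omega : ¬ i + 1 ≤ t + 1)).symm
                · rw [if_neg hpq]
          · refine (Finset.sum_eq_zero ?_).trans ?_
            · rintro ⟨ℓs, c⟩ -
              by_cases h1 : (ℓs : ℕ) = t
              · rw [hPapp, hPapp, hblk₂ ℓs l' c b ?_, mul_zero, mul_zero]
                intro hh
                exact hc (Fin.ext (by omega))
              · rw [hPapp, hblk₂ ℓs ⟨t + 1, hlt⟩ c a ?_, star_zero, zero_mul]
                show t + 1 ≠ (ℓs : ℕ) + 1
                omega
            · rw [Matrix.diagonal_apply, if_neg ?_]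
              intro hh
              exact hc (congrArg Sigma.fst hh).symm
      have g2 : Pᴴ * (Matrix.diagonal (fun p : Σ ℓ : Fin j, Fin (ns ℓ) =>
          if i ≤ (p.1 : ℕ) then (1 : ℂ) else 0) * Q) = 0 := by
        ext p b
        rw [Matrix.mul_apply]
        simp only [Matrix.conjTranspose_apply, Matrix.diagonal_mul, Matrix.zero_apply]
        obtain ⟨l, a⟩ := p
        have hlj := l.isLt
        apply Finset.sum_eq_zero
        rintro ⟨ℓs, c⟩ -
        by_cases h1 : (ℓs : ℕ) = j - 1
        · rw [hPapp, hblk₂ ℓs l c a (by omega), star_zero, zero_mul]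
        · rw [hQapp, hblk₄ ℓs h1 c b, mul_zero, mul_zero]
      have g3 : Qᴴ * (Matrix.diagonal (fun p : Σ ℓ : Fin j, Fin (ns ℓ) =>
          if i ≤ (p.1 : ℕ) then (1 : ℂ) else 0) * P) = 0 := by
        ext x q
        rw [Matrix.mul_apply]
        simp only [Matrix.conjTranspose_apply, Matrix.diagonal_mul, Matrix.zero_apply]
        obtain ⟨l, b⟩ := q
        have hlj := l.isLt
        apply Finset.sum_eq_zero
        rintro ⟨ℓs, c⟩ -
        by_cases h1 : (ℓs : ℕ) = j - 1
        · rw [hPapp, hblk₂ ℓs l c b (by omega), mul_zero, mul_zero]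
        · rw [hQapp, hblk₄ ℓs h1 c x, star_zero, zero_mul]
      have hq : Qᴴ * (Matrix.diagonal (fun p : Σ ℓ : Fin j, Fin (ns ℓ) =>
          if i ≤ (p.1 : ℕ) then (1 : ℂ) else 0) * Q) =
          if i < j then Bᴴ * B else 0 := by
        ext a b
        rw [Matrix.mul_apply]
        simp only [Matrix.conjTranspose_apply, Matrix.diagonal_mul]
        rw [← Finset.univ_sigma_univ, Finset.sum_sigma]
        refine (Finset.sum_eq_single_of_mem (⟨j - 1, Nat.sub_lt hj Nat.one_pos⟩ : Fin j)
          (Finset.mem_univ _) ?_).trans ?_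
        · rintro ℓs - hne
          apply Finset.sum_eq_zero
          intro c _
          rw [hQapp, hblk₄ ℓs (fun hh => hne (Fin.ext hh)) c a, star_zero, zero_mul]
        · have hQe : ∀ x : Fin m, ∀ c : Fin (ns ⟨j - 1, Nat.sub_lt hj Nat.one_pos⟩),
              Q ⟨⟨j - 1, Nat.sub_lt hj Nat.one_pos⟩, c⟩ x = B c x := by
            intro x c
            rw [hQapp]
            exact hblk₃ c x
          simp only [hQe]
          by_cases hij : i < j
          · have hone : (if i ≤ ((⟨j - 1, Nat.sub_lt hj Nat.one_pos⟩ : Fin j) : ℕ)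
                then (1 : ℂ) else 0) = 1 := if_pos (by show i ≤ j - 1; omega)
            simp only [hone, one_mul, if_pos hij]
            rw [Matrix.mul_apply]
            simp only [Matrix.conjTranspose_apply]
          · have hzero : (if i ≤ ((⟨j - 1, Nat.sub_lt hj Nat.one_pos⟩ : Fin j) : ℕ)
                then (1 : ℂ) else 0) = 0 := if_neg (by show ¬ i ≤ j - 1; omega)
            simp only [hzero, zero_mul, mul_zero, Finset.sum_const_zero, if_neg hij,
              Matrix.zero_apply]
      have g4 : Qᴴ * (Matrix.diagonal (fun p : Σ ℓ : Fin j, Fin (ns ℓ) =>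
          if i ≤ (p.1 : ℕ) then (1 : ℂ) else 0) * Q) +
          Cᴴ * ((C ^ (i - j))ᴴ * (C ^ (i - j) * C)) =
          (C ^ (i + 1 - j))ᴴ * C ^ (i + 1 - j) := by
        rw [hq]
        by_cases hij : i < j
        · rw [if_pos hij]
          have h0 : i - j = 0 := by omega
          have h1 : i + 1 - j = 0 := by omega
          rw [h0, h1, pow_zero]
          simpa using hBC
        · rw [if_neg hij, zero_add]
          have h1 : i + 1 - j = (i - j) + 1 := by omega
          rw [h1, pow_succ]
          simp only [Matrix.conjTranspose_mul, Matrix.mul_assoc]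
      -- assembly
      rw [pow_succ, Matrix.conjTranspose_mul]
      have hassoc : A'ᴴ * (A' ^ i)ᴴ * (A' ^ i * A') =
          A'ᴴ * (((A' ^ i)ᴴ * A' ^ i) * A') := by
        simp only [Matrix.mul_assoc]
      rw [hassoc, ih, hA'blk, Matrix.fromBlocks_conjTranspose,
        Matrix.fromBlocks_multiply, Matrix.fromBlocks_multiply]
      simp only [Matrix.zero_mul, Matrix.mul_zero, add_zero, zero_add,
        Matrix.conjTranspose_zero, Matrix.mul_assoc]
      rw [g1, g2, g3, g4]

end Aux

/-- **Lemma 3.2 (a).** If the `n`-by-`n` matrix `A` is unitarily similar to the block matrix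
`A'` on `ℂ^{n₁} ⊕ ⋯ ⊕ ℂ^{n_j} ⊕ ℂ^m` with superdiagonal blocks `A₁, …, A_{j-1}` (with
`A_ℓ* A_ℓ = I`), `(j, j+1)` block `B`, `(j+1, j+1)` block `C` (with `B*B + C*C = I`), and all
other blocks zero, where `1 ≤ j ≤ a(A)`, then `p(A) = j + p(C)`. -/
theorem pIndex_eq_of_unitarilySimilar_blockForm (j m : ℕ) (hj : 0 < j) (ns : Fin j → ℕ)
    (A' : Matrix ((Σ ℓ : Fin j, Fin (ns ℓ)) ⊕ Fin m) ((Σ ℓ : Fin j, Fin (ns ℓ)) ⊕ Fin m) ℂ)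
    (As : ∀ (ℓ : Fin j) (h : (ℓ : ℕ) + 1 < j),
      Matrix (Fin (ns ℓ)) (Fin (ns ⟨(ℓ : ℕ) + 1, h⟩)) ℂ)
    (B : Matrix (Fin (ns ⟨j - 1, Nat.sub_lt hj Nat.one_pos⟩)) (Fin m) ℂ)
    (C : Matrix (Fin m) (Fin m) ℂ)
    (hAs : ∀ (ℓ : Fin j) (h : (ℓ : ℕ) + 1 < j), (As ℓ h)ᴴ * As ℓ h = 1)
    (hBC : Bᴴ * B + Cᴴ * C = 1)
    (hblk₁ : ∀ (ℓ : Fin j) (h : (ℓ : ℕ) + 1 < j) (a : Fin (ns ℓ))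
      (b : Fin (ns ⟨(ℓ : ℕ) + 1, h⟩)),
      A' (Sum.inl ⟨ℓ, a⟩) (Sum.inl ⟨⟨(ℓ : ℕ) + 1, h⟩, b⟩) = As ℓ h a b)
    (hblk₂ : ∀ (ℓ ℓ' : Fin j) (a : Fin (ns ℓ)) (b : Fin (ns ℓ')), (ℓ' : ℕ) ≠ (ℓ : ℕ) + 1 →
      A' (Sum.inl ⟨ℓ, a⟩) (Sum.inl ⟨ℓ', b⟩) = 0)
    (hblk₃ : ∀ (a : Fin (ns ⟨j - 1, Nat.sub_lt hj Nat.one_pos⟩)) (b : Fin m),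
      A' (Sum.inl ⟨⟨j - 1, Nat.sub_lt hj Nat.one_pos⟩, a⟩) (Sum.inr b) = B a b)
    (hblk₄ : ∀ (ℓ : Fin j), (ℓ : ℕ) ≠ j - 1 → ∀ (a : Fin (ns ℓ)) (b : Fin m),
      A' (Sum.inl ⟨ℓ, a⟩) (Sum.inr b) = 0)
    (hblk₅ : ∀ a b : Fin m, A' (Sum.inr a) (Sum.inr b) = C a b)
    (hblk₆ : ∀ (a : Fin m) (ℓ : Fin j) (b : Fin (ns ℓ)), A' (Sum.inr a) (Sum.inl ⟨ℓ, b⟩) = 0)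
    (n : ℕ) (A : Matrix (Fin n) (Fin n) ℂ)
    (hn : n = (∑ ℓ : Fin j, ns ℓ) + m)
    (hsim : A.UnitarilySimilarTo A')
    (hja : j ≤ A.ascent) :
    A.pIndex = (j : ℕ∞) + C.pIndex := by
  classical
  obtain ⟨U, hU1, hU2, hA'def⟩ := hsim
  rw [Matrix.pIndex_unitary A A' U hU1 hU2 hA'def]
  have key := block_key j m hj ns A' As B C hAs hBC hblk₁ hblk₂ hblk₃ hblk₄ hblk₅ hblk₆
  have hPIiff : ∀ i : ℕ, (A' ^ i).IsPartialIsometry ↔ (C ^ (i - j)).IsPartialIsometry := by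
    intro i
    rw [Matrix.isPartialIsometry_iff, Matrix.isPartialIsometry_iff, key i]
    set Δ := Matrix.diagonal (fun p : Σ ℓ : Fin j, Fin (ns ℓ) =>
      if i ≤ (p.1 : ℕ) then (1 : ℂ) else 0) with hΔ
    set G := (C ^ (i - j))ᴴ * C ^ (i - j) with hG
    have hΔΔ : Δ * Δ = Δ := by
      have hfun : (fun p : Σ ℓ : Fin j, Fin (ns ℓ) =>
          (if i ≤ (p.1 : ℕ) then (1 : ℂ) else 0) * (if i ≤ (p.1 : ℕ) then (1 : ℂ) else 0)) =
          fun p : Σ ℓ : Fin j, Fin (ns ℓ) => if i ≤ (p.1 : ℕ) then (1 : ℂ) else 0 := by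
        funext p
        by_cases h : i ≤ (p.1 : ℕ) <;> simp [h]
      rw [hΔ, Matrix.diagonal_mul_diagonal, hfun]
    have hmul : Matrix.fromBlocks Δ 0 0 G * Matrix.fromBlocks Δ 0 0 G =
        Matrix.fromBlocks Δ 0 0 (G * G) := by
      rw [Matrix.fromBlocks_multiply]
      simp [hΔΔ]
    rw [hmul, Matrix.fromBlocks_inj]
    constructor
    · rintro ⟨-, -, -, h⟩; exact h
    · intro h; exact ⟨rfl, rfl, rfl, h⟩
  have hone : ∀ k : ℕ, k = 0 → (C ^ k).IsPartialIsometry := by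
    intro k hk; subst hk
    rw [Matrix.isPartialIsometry_iff]
    simp
  set S := {k : ℕ | ∀ k' ≤ k, (C ^ k').IsPartialIsometry} with hS
  have hSdc : ∀ a b : ℕ, a ≤ b → b ∈ S → a ∈ S := fun a b hab hb k hk => hb k (hk.trans hab)
  have hS0 : 0 ∈ S := by
    intro k hk
    exact hone k (Nat.le_zero.mp hk)
  have hTset : {i : ℕ | ∀ i' ≤ i, (A' ^ i').IsPartialIsometry} = {i : ℕ | i - j ∈ S} := by
    ext i
    simp only [Set.mem_setOf_eq]
    constructor
    · intro h k hk
      by_cases hk0 : k = 0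
      · exact hone k hk0
      · have hji : j + k ≤ i := by omega
        have h2 := h (j + k) hji
        rw [hPIiff] at h2
        simpa [show j + k - j = k by omega] using h2
    · intro h i' hi'
      rw [hPIiff]
      exact h (i' - j) (by omega)
  show A'.pIndex = (j : ℕ∞) + C.pIndex
  unfold Matrix.pIndex
  rw [hTset, sup_shift j S hS0 hSdc]


end
end

section
/- Let A be an n-by-n complex matrix which is unitarily similar to the upper-triangular block matrix A′ with blocks A₁, …, A_{j−1} on the superdiagonal positions, then B and C, acting on ℂⁿ = ℂ^{n₁} ⊕ ⋯ ⊕ ℂ^{n_j} ⊕ ℂ^m (A′ has zero diagonal blocks in the first j positions, A_ℓ is the (ℓ, ℓ+1) block for 1 ≤ ℓ ≤ j−1, B is the (j, j+1) block, C is the (j+1, j+1) block, and all other blocks are zero), where A_ℓ*A_ℓ = I_{n_{ℓ+1}} for 1 ≤ ℓ ≤ j − 1 and B*B + C*C = I_m, and where 1 ≤ j ≤ a(A). Then a(A) = j + a(C). -/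
open Matrix

noncomputable section

namespace AscentAux

variable {ι : Type*} [Fintype ι] [DecidableEq ι]

/-- The stabilization set of a matrix, phrased via `mulVec`. -/
def S (M : Matrix ι ι ℂ) : Set ℕ :=
  {k | ∀ v : ι → ℂ, (M ^ k).mulVec v = 0 ↔ (M ^ (k + 1)).mulVec v = 0}

lemma mem_ker_iff (M : Matrix ι ι ℂ) (v : ι → ℂ) :
    (WithLp.equiv 2 (ι → ℂ)).symm v ∈ LinearMap.ker (Matrix.toEuclideanLin M) ↔
      M.mulVec v = 0 := by
  rw [LinearMap.mem_ker, WithLp.equiv_symm_apply, Matrix.toEuclideanLin_apply_piLp_toLp]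
  constructor
  · intro h
    have := congrArg (WithLp.equiv 2 (ι → ℂ)) h
    simpa using this
  · intro h
    rw [h]
    simp

lemma ker_eq_iff (M N : Matrix ι ι ℂ) :
    LinearMap.ker (Matrix.toEuclideanLin M) = LinearMap.ker (Matrix.toEuclideanLin N) ↔
      ∀ v : ι → ℂ, M.mulVec v = 0 ↔ N.mulVec v = 0 := by
  constructor
  · intro h v
    rw [← mem_ker_iff M v, ← mem_ker_iff N v, h]
  · intro h
    ext x
    obtain ⟨v, rfl⟩ := (WithLp.equiv 2 (ι → ℂ)).symm.surjective x
    rw [mem_ker_iff, mem_ker_iff, h v]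

lemma ascent_eq_sInf (M : Matrix ι ι ℂ) : M.ascent = sInf (S M) := by
  unfold Matrix.ascent S
  congr 1
  ext k
  simp only [Set.mem_setOf_eq]
  exact ker_eq_iff _ _

lemma pow_conj {κ : Type*} [Fintype κ] [DecidableEq κ] (U : Matrix ι κ ℂ) (A : Matrix ι ι ℂ)
    (hU1 : Uᴴ * U = 1) (hU2 : U * Uᴴ = 1) (k : ℕ) :
    (Uᴴ * A * U) ^ k = Uᴴ * A ^ k * U := by
  induction k with
  | zero => simp [hU1]
  | succ k ih =>
    rw [pow_succ, ih, pow_succ]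
    calc Uᴴ * A ^ k * U * (Uᴴ * A * U)
        = Uᴴ * A ^ k * (U * Uᴴ) * (A * U) := by simp only [Matrix.mul_assoc]
      _ = Uᴴ * (A ^ k * A) * U := by rw [hU2, Matrix.mul_one]; simp only [Matrix.mul_assoc]

lemma S_conj {κ : Type*} [Fintype κ] [DecidableEq κ] (U : Matrix ι κ ℂ) (A : Matrix ι ι ℂ)
    (hU1 : Uᴴ * U = 1) (hU2 : U * Uᴴ = 1) :
    S (Uᴴ * A * U) = S A := by
  have key : ∀ (k : ℕ) (v : κ → ℂ),
      ((Uᴴ * A * U) ^ k).mulVec v = 0 ↔ (A ^ k).mulVec (U.mulVec v) = 0 := by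
    intro k v
    rw [pow_conj U A hU1 hU2 k, ← Matrix.mulVec_mulVec, ← Matrix.mulVec_mulVec]
    constructor
    · intro h
      have := congrArg (fun w => U.mulVec w) h
      simpa [Matrix.mulVec_mulVec, ← Matrix.mul_assoc, hU2] using this
    · intro h
      rw [h, Matrix.mulVec_zero]
  ext k
  simp only [S, Set.mem_setOf_eq]
  constructor
  · intro h w
    have h2 := h (Uᴴ.mulVec w)
    rw [key, key] at h2
    have hv : U.mulVec (Uᴴ.mulVec w) = w := by
      rw [Matrix.mulVec_mulVec, hU2, Matrix.one_mulVec]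
    rwa [hv] at h2
  · intro h v
    rw [key, key]
    exact h _

end AscentAux


/-- **Lemma 3.2 (b).** If the `n`-by-`n` matrix `A` is unitarily similar to the block matrix
`A'` on `ℂ^{n₁} ⊕ ⋯ ⊕ ℂ^{n_j} ⊕ ℂ^m` with superdiagonal blocks `A₁, …, A_{j-1}` (with
`A_ℓ* A_ℓ = I`), `(j, j+1)` block `B`, `(j+1, j+1)` block `C` (with `B*B + C*C = I`), and all
other blocks zero, where `1 ≤ j ≤ a(A)`, then `a(A) = j + a(C)`. -/
theorem ascent_eq_of_unitarilySimilar_blockForm (j m : ℕ) (hj : 0 < j) (ns : Fin j → ℕ)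
    (A' : Matrix ((Σ ℓ : Fin j, Fin (ns ℓ)) ⊕ Fin m) ((Σ ℓ : Fin j, Fin (ns ℓ)) ⊕ Fin m) ℂ)
    (As : ∀ (ℓ : Fin j) (h : (ℓ : ℕ) + 1 < j),
      Matrix (Fin (ns ℓ)) (Fin (ns ⟨(ℓ : ℕ) + 1, h⟩)) ℂ)
    (B : Matrix (Fin (ns ⟨j - 1, Nat.sub_lt hj Nat.one_pos⟩)) (Fin m) ℂ)
    (C : Matrix (Fin m) (Fin m) ℂ)
    (hAs : ∀ (ℓ : Fin j) (h : (ℓ : ℕ) + 1 < j), (As ℓ h)ᴴ * As ℓ h = 1)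
    (hBC : Bᴴ * B + Cᴴ * C = 1)
    (hblk₁ : ∀ (ℓ : Fin j) (h : (ℓ : ℕ) + 1 < j) (a : Fin (ns ℓ))
      (b : Fin (ns ⟨(ℓ : ℕ) + 1, h⟩)),
      A' (Sum.inl ⟨ℓ, a⟩) (Sum.inl ⟨⟨(ℓ : ℕ) + 1, h⟩, b⟩) = As ℓ h a b)
    (hblk₂ : ∀ (ℓ ℓ' : Fin j) (a : Fin (ns ℓ)) (b : Fin (ns ℓ')), (ℓ' : ℕ) ≠ (ℓ : ℕ) + 1 →
      A' (Sum.inl ⟨ℓ, a⟩) (Sum.inl ⟨ℓ', b⟩) = 0)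
    (hblk₃ : ∀ (a : Fin (ns ⟨j - 1, Nat.sub_lt hj Nat.one_pos⟩)) (b : Fin m),
      A' (Sum.inl ⟨⟨j - 1, Nat.sub_lt hj Nat.one_pos⟩, a⟩) (Sum.inr b) = B a b)
    (hblk₄ : ∀ (ℓ : Fin j), (ℓ : ℕ) ≠ j - 1 → ∀ (a : Fin (ns ℓ)) (b : Fin m),
      A' (Sum.inl ⟨ℓ, a⟩) (Sum.inr b) = 0)
    (hblk₅ : ∀ a b : Fin m, A' (Sum.inr a) (Sum.inr b) = C a b)
    (hblk₆ : ∀ (a : Fin m) (ℓ : Fin j) (b : Fin (ns ℓ)), A' (Sum.inr a) (Sum.inl ⟨ℓ, b⟩) = 0)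
    (n : ℕ) (A : Matrix (Fin n) (Fin n) ℂ)
    (hn : n = (∑ ℓ : Fin j, ns ℓ) + m)
    (hsim : A.UnitarilySimilarTo A')
    (hja : j ≤ A.ascent) :
    A.ascent = j + C.ascent := by
  classical
  obtain ⟨U, hU1, hU2, hA'⟩ := hsim
  have hSA : AscentAux.S A' = AscentAux.S A := by
    rw [hA']; exact AscentAux.S_conj U A hU1 hU2
  have hascA : A.ascent = sInf (AscentAux.S A') := by
    rw [AscentAux.ascent_eq_sInf, hSA]
  -- component computations for `A'.mulVec`
  have comp3 : ∀ (x : ((Σ ℓ : Fin j, Fin (ns ℓ)) ⊕ Fin m) → ℂ) (a : Fin m),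
      A'.mulVec x (Sum.inr a) = C.mulVec (fun b => x (Sum.inr b)) a := by
    intro x a
    simp only [Matrix.mulVec, dotProduct]
    rw [Fintype.sum_sum_type]
    have h0 : ∀ p : (Σ ℓ : Fin j, Fin (ns ℓ)),
        A' (Sum.inr a) (Sum.inl p) * x (Sum.inl p) = 0 := by
      rintro ⟨ℓ, b⟩
      rw [hblk₆]
      exact zero_mul _
    rw [Finset.sum_congr rfl fun p _ => h0 p, Finset.sum_const_zero, zero_add]
    simp only [hblk₅]
  have comp2 : ∀ (x : ((Σ ℓ : Fin j, Fin (ns ℓ)) ⊕ Fin m) → ℂ)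
      (a : Fin (ns ⟨j - 1, Nat.sub_lt hj Nat.one_pos⟩)),
      A'.mulVec x (Sum.inl ⟨⟨j - 1, Nat.sub_lt hj Nat.one_pos⟩, a⟩) =
        B.mulVec (fun b => x (Sum.inr b)) a := by
    intro x a
    simp only [Matrix.mulVec, dotProduct]
    rw [Fintype.sum_sum_type]
    have h0 : ∀ p : (Σ ℓ : Fin j, Fin (ns ℓ)),
        A' (Sum.inl ⟨⟨j - 1, Nat.sub_lt hj Nat.one_pos⟩, a⟩) (Sum.inl p) * x (Sum.inl p) = 0 := by
      rintro ⟨ℓ', b⟩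
      rw [hblk₂ _ ℓ' a b (by have := ℓ'.isLt; show (ℓ' : ℕ) ≠ j - 1 + 1; omega)]
      exact zero_mul _
    rw [Finset.sum_congr rfl fun p _ => h0 p, Finset.sum_const_zero, zero_add]
    simp only [hblk₃]
  have comp1 : ∀ (x : ((Σ ℓ : Fin j, Fin (ns ℓ)) ⊕ Fin m) → ℂ) (ℓ : Fin j)
      (h : (ℓ : ℕ) + 1 < j) (a : Fin (ns ℓ)),
      A'.mulVec x (Sum.inl ⟨ℓ, a⟩) =
        (As ℓ h).mulVec (fun b => x (Sum.inl ⟨⟨(ℓ : ℕ) + 1, h⟩, b⟩)) a := by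
    intro x ℓ h a
    simp only [Matrix.mulVec, dotProduct]
    rw [Fintype.sum_sum_type]
    have h2 : ∀ b : Fin m, A' (Sum.inl ⟨ℓ, a⟩) (Sum.inr b) * x (Sum.inr b) = 0 := by
      intro b
      rw [hblk₄ ℓ (by omega) a b]
      exact zero_mul _
    rw [Finset.sum_congr rfl fun b _ => h2 b, Finset.sum_const_zero, add_zero]
    rw [← Finset.univ_sigma_univ, Finset.sum_sigma]
    rw [Finset.sum_eq_single (⟨(ℓ : ℕ) + 1, h⟩ : Fin j)]
    · simp only [hblk₁]
    · intro ℓ' _ hne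
      apply Finset.sum_eq_zero
      intro b _
      rw [hblk₂ ℓ ℓ' a b (fun hc => hne (Fin.ext hc))]
      exact zero_mul _
    · intro habs
      exact absurd (Finset.mem_univ _) habs
  -- injectivity facts
  have Asinj : ∀ (ℓ : Fin j) (h : (ℓ : ℕ) + 1 < j) (v : Fin (ns ⟨(ℓ : ℕ) + 1, h⟩) → ℂ),
      (As ℓ h).mulVec v = 0 → v = 0 := by
    intro ℓ h v hv
    have h2 := congrArg (fun w => (As ℓ h)ᴴ.mulVec w) hv
    simpa [Matrix.mulVec_mulVec, hAs ℓ h, Matrix.one_mulVec] using h2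
  have BCinj : ∀ v : Fin m → ℂ, B.mulVec v = 0 → C.mulVec v = 0 → v = 0 := by
    intro v hB hC
    have h2 : (Bᴴ * B + Cᴴ * C).mulVec v = 0 := by
      rw [Matrix.add_mulVec, ← Matrix.mulVec_mulVec, ← Matrix.mulVec_mulVec, hB, hC,
        Matrix.mulVec_zero, Matrix.mulVec_zero, add_zero]
    rwa [hBC, Matrix.one_mulVec] at h2
  -- the key kernel characterization of powers of `A'`
  have char : ∀ (k : ℕ) (x : ((Σ ℓ : Fin j, Fin (ns ℓ)) ⊕ Fin m) → ℂ),
      (A' ^ k).mulVec x = 0 ↔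
        ((∀ (ℓ : Fin j) (a : Fin (ns ℓ)), k ≤ (ℓ : ℕ) → x (Sum.inl ⟨ℓ, a⟩) = 0) ∧
          (C ^ (k - j)).mulVec (fun b => x (Sum.inr b)) = 0) := by
    intro k
    induction k with
    | zero =>
      intro x
      rw [pow_zero, Matrix.one_mulVec, Nat.zero_sub, pow_zero, Matrix.one_mulVec]
      constructor
      · intro hx
        refine ⟨fun ℓ a _ => ?_, funext fun b => ?_⟩
        · rw [hx]; rfl
        · show x (Sum.inr b) = 0
          rw [hx]; rfl
      · rintro ⟨h1, h2⟩
        funext p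
        match p with
        | Sum.inl ⟨ℓ, a⟩ => exact h1 ℓ a (Nat.zero_le _)
        | Sum.inr b => exact congrFun h2 b
    | succ k ih =>
      intro x
      rw [pow_succ, ← Matrix.mulVec_mulVec, ih (A'.mulVec x)]
      have hy : (fun b => A'.mulVec x (Sum.inr b)) = C.mulVec (fun b => x (Sum.inr b)) :=
        funext fun b => comp3 x b
      rw [hy, Matrix.mulVec_mulVec, ← pow_succ]
      by_cases hkj : j ≤ k
      · rw [show k - j + 1 = k + 1 - j from by omega]
        constructor
        · rintro ⟨-, h2⟩
          exact ⟨fun ℓ a hl => absurd ℓ.isLt (by omega), h2⟩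
        · rintro ⟨-, h2⟩
          exact ⟨fun ℓ a hl => absurd ℓ.isLt (by omega), h2⟩
      · rw [show k - j + 1 = 1 from by omega, show k + 1 - j = 0 from by omega,
          pow_one, pow_zero, Matrix.one_mulVec]
        constructor
        · rintro ⟨h1, h2⟩
          have hBy : B.mulVec (fun b => x (Sum.inr b)) = 0 := by
            funext a
            rw [← comp2 x a]
            exact h1 ⟨j - 1, Nat.sub_lt hj Nat.one_pos⟩ a (by show k ≤ j - 1; omega)
          have hy0 := BCinj _ hBy h2
          refine ⟨?_, hy0⟩
          have key : ∀ (ℓ' : Fin j) (h : (ℓ' : ℕ) + 1 < j), k ≤ (ℓ' : ℕ) →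
              (fun c => x (Sum.inl ⟨⟨(ℓ' : ℕ) + 1, h⟩, c⟩)) = 0 := by
            intro ℓ' h hk'
            apply Asinj ℓ' h
            funext b
            rw [← comp1 x ℓ' h b]
            exact h1 ℓ' b hk'
          intro ℓ a hl
          have hℓj := ℓ.isLt
          have pf : (ℓ : ℕ) - 1 < j := by omega
          have h' : ((⟨(ℓ : ℕ) - 1, pf⟩ : Fin j) : ℕ) + 1 < j := by
            show (ℓ : ℕ) - 1 + 1 < j; omega
          have h0 := key ⟨(ℓ : ℕ) - 1, pf⟩ h' (show k ≤ (ℓ : ℕ) - 1 by omega)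
          have he : (⟨((⟨(ℓ : ℕ) - 1, pf⟩ : Fin j) : ℕ) + 1, h'⟩ : Fin j) = ℓ := by
            apply Fin.ext
            show (ℓ : ℕ) - 1 + 1 = ℓ
            omega
          rw [he] at h0
          exact congrFun h0 a
        · rintro ⟨g1, g2⟩
          refine ⟨?_, by rw [g2, Matrix.mulVec_zero]⟩
          intro ℓ a hl
          have hℓj := ℓ.isLt
          by_cases hcase : (ℓ : ℕ) + 1 < j
          · rw [comp1 x ℓ hcase a]
            have hz : (fun b => x (Sum.inl ⟨⟨(ℓ : ℕ) + 1, hcase⟩, b⟩)) = 0 :=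
              funext fun b => g1 ⟨(ℓ : ℕ) + 1, hcase⟩ b (by show k + 1 ≤ (ℓ : ℕ) + 1; omega)
            rw [hz, Matrix.mulVec_zero]
            rfl
          · have he : ℓ = ⟨j - 1, Nat.sub_lt hj Nat.one_pos⟩ := by
              apply Fin.ext
              show (ℓ : ℕ) = j - 1
              omega
            subst he
            rw [comp2 x a, g2, Matrix.mulVec_zero]
            rfl
  -- membership in the stabilization set of `A'` for `k ≥ j`
  have Schar : ∀ k, j ≤ k → ((k ∈ AscentAux.S A') ↔ (k - j) ∈ AscentAux.S C) := by
    intro k hk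
    simp only [AscentAux.S, Set.mem_setOf_eq]
    constructor
    · intro hS w
      have h := hS (Sum.elim (fun _ => 0) w)
      rw [char k, char (k + 1)] at h
      have hww : (fun b => (Sum.elim (fun _ => (0 : ℂ)) w :
          ((Σ ℓ : Fin j, Fin (ns ℓ)) ⊕ Fin m) → ℂ) (Sum.inr b)) = w := rfl
      rw [hww] at h
      constructor
      · intro hw
        have h2 := (h.mp ⟨fun _ _ _ => rfl, hw⟩).2
        rwa [show k + 1 - j = k - j + 1 from by omega] at h2
      · intro hw
        refine (h.mpr ⟨fun _ _ _ => rfl, ?_⟩).2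
        rwa [show k + 1 - j = k - j + 1 from by omega]
    · intro hC x
      rw [char k, char (k + 1)]
      constructor
      · rintro ⟨-, h2⟩
        refine ⟨fun ℓ a hla => absurd ℓ.isLt (by omega), ?_⟩
        rw [show k + 1 - j = k - j + 1 from by omega]
        exact (hC _).mp h2
      · rintro ⟨-, h2⟩
        refine ⟨fun ℓ a hla => absurd ℓ.isLt (by omega), ?_⟩
        apply (hC _).mpr
        rwa [show k + 1 - j = k - j + 1 from by omega] at h2
  -- finale
  have hne : (AscentAux.S A').Nonempty := by
    by_contra hemp
    rw [Set.not_nonempty_iff_eq_empty] at hemp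
    rw [hascA, hemp, Nat.sInf_empty] at hja
    omega
  have hmem : sInf (AscentAux.S A') ∈ AscentAux.S A' := Nat.sInf_mem hne
  have hjle : j ≤ sInf (AscentAux.S A') := hascA ▸ hja
  have h1 : sInf (AscentAux.S A') - j ∈ AscentAux.S C := (Schar _ hjle).mp hmem
  have h2 : sInf (AscentAux.S C) ≤ sInf (AscentAux.S A') - j := Nat.sInf_le h1
  have hCne : (AscentAux.S C).Nonempty := ⟨_, h1⟩
  have h3 : j + sInf (AscentAux.S C) ∈ AscentAux.S A' := by
    refine (Schar (j + sInf (AscentAux.S C)) (Nat.le_add_right _ _)).mpr ?_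
    rw [show j + sInf (AscentAux.S C) - j = sInf (AscentAux.S C) from by omega]
    exact Nat.sInf_mem hCne
  have h4 : sInf (AscentAux.S A') ≤ j + sInf (AscentAux.S C) := Nat.sInf_le h3
  rw [hascA, AscentAux.ascent_eq_sInf C]
  omega

end
end
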